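/- arXiv:1306.2133 — 5 statements merged into one kernel-verified Lean document; each statement's English description precedes it below -/
import Mathlib

section
/- Let k ≥ 4 be an integer. Let q : (0,1] → ℝ be absolutely continuous on every compact subinterval of (0,1] with q(x) = −∫_x^1 q'(t) dt for all x ∈ (0,1], and suppose 0 < ∫₀¹ x^{k−1} q'(x)² dx < ∞. Then (k−1) ∫₀¹ x^{k−2} q(x)² dx < (4/(k + log₂ k − 5)) ∫₀¹ x^{k−1} q'(x)² dx. -/
open MeasureTheory Set
open scoped ENNReal

lemma my_cs {μ : Measure ℝ} {f g : ℝ → ℝ}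
    (hfm : AEStronglyMeasurable f μ) (hgm : AEStronglyMeasurable g μ)
    (hf2 : Integrable (fun x => f x ^ 2) μ) (hg2 : Integrable (fun x => g x ^ 2) μ)
    (hfn : 0 ≤ᵐ[μ] f) (hgn : 0 ≤ᵐ[μ] g) :
    (∫ x, f x * g x ∂μ) ^ 2 ≤ (∫ x, f x ^ 2 ∂μ) * (∫ x, g x ^ 2 ∂μ) := by
  have hpq : Real.HolderConjugate 2 2 := Real.HolderConjugate.two_two
  have hfl : MemLp f (ENNReal.ofReal 2) μ := by
    rw [show ENNReal.ofReal 2 = 2 by norm_num]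
    exact (memLp_two_iff_integrable_sq hfm).2 hf2
  have hgl : MemLp g (ENNReal.ofReal 2) μ := by
    rw [show ENNReal.ofReal 2 = 2 by norm_num]
    exact (memLp_two_iff_integrable_sq hgm).2 hg2
  have h := MeasureTheory.integral_mul_le_Lp_mul_Lq_of_nonneg hpq hfn hgn hfl hgl
  have hrw : ∀ (h : ℝ → ℝ), (∫ x, h x ^ (2:ℝ) ∂μ) = ∫ x, h x ^ 2 ∂μ := by
    intro h; congr 1; ext x; rw [← Real.rpow_natCast (h x) 2]; norm_num
  rw [hrw f, hrw g] at h
  have h1 : 0 ≤ ∫ x, f x * g x ∂μ :=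
    integral_nonneg_of_ae ((hfn.and hgn).mono fun x hx => mul_nonneg hx.1 hx.2)
  have h2 : 0 ≤ ∫ x, f x ^ 2 ∂μ := integral_nonneg fun x => sq_nonneg _
  have h3 : 0 ≤ ∫ x, g x ^ 2 ∂μ := integral_nonneg fun x => sq_nonneg _
  calc (∫ x, f x * g x ∂μ) ^ 2
      ≤ ((∫ x, f x ^ 2 ∂μ) ^ (1/2:ℝ) * (∫ x, g x ^ 2 ∂μ) ^ (1/2:ℝ)) ^ 2 := by
        apply pow_le_pow_left₀ h1 h
    _ = (∫ x, f x ^ 2 ∂μ) * (∫ x, g x ^ 2 ∂μ) := by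
        rw [mul_pow, ← Real.rpow_natCast (_ ^ (1/2:ℝ)) 2, ← Real.rpow_natCast (_ ^ (1/2:ℝ)) 2,
          ← Real.rpow_mul h2, ← Real.rpow_mul h3]
        norm_num

lemma my_stepC {K m t u : ℝ} (hK : 4 ≤ K) (hm : m = K/2)
    (hu : u = ((K-1)/(m^2-1)) ^ (1/m)) (ht : 0 < t) :
    t/(m-1) - t^(m+1)/(K-1) ≤ m * u / (m^2-1) := by
  have hm2 : 2 ≤ m := by rw [hm]; linarith
  have hm0 : m ≠ 0 := by linarith
  have hm1 : 0 < m^2 - 1 := by nlinarith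
  have hK1 : (0:ℝ) < K - 1 := by linarith
  have hbase : 0 < (K-1)/(m^2-1) := div_pos hK1 hm1
  have hu0 : 0 < u := by rw [hu]; exact Real.rpow_pos_of_pos hbase _
  have hkey : u ^ m = (K-1)/(m^2-1) := by
    rw [hu, one_div, Real.rpow_inv_rpow hbase.le hm0]
  -- Bernoulli: u^(m+1) + (m+1) u^m (t-u) ≤ t^(m+1)
  have hs : (-1:ℝ) ≤ t/u - 1 := by
    have : 0 < t/u := div_pos ht hu0; linarith
  have hb := one_add_mul_self_le_rpow_one_add hs (by linarith : (1:ℝ) ≤ m + 1)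
  have htu : u * (1 + (t/u - 1)) = t := by field_simp; ring
  have hber : u^(m+1) * (1 + (m+1)*(t/u-1)) ≤ t^(m+1) := by
    calc u^(m+1) * (1 + (m+1)*(t/u-1)) ≤ u^(m+1) * (1 + (t/u-1))^(m+1) := by
          apply mul_le_mul_of_nonneg_left hb (Real.rpow_nonneg hu0.le _)
      _ = (u * (1 + (t/u-1)))^(m+1) := (Real.mul_rpow hu0.le (by linarith)).symm
      _ = t^(m+1) := by rw [htu]
  have hup : u^(m+1) = u^m * u := by
    rw [← Real.rpow_add_one hu0.ne' m]
  rw [hup, hkey] at hber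
  -- now pure algebra
  have h2 : (K-1)/(m^2-1) * u * (1 + (m+1)*(t/u-1)) = u * (K-1)/(m^2-1)
      + (m+1) * ((K-1)/(m^2-1)) * (t - u) := by field_simp
  rw [h2] at hber
  have hber2 : u*(K-1) + (m+1)*((K-1)*(t-u)) ≤ t^(m+1) * (m^2-1) := by
    have h3 : u * (K - 1) / (m ^ 2 - 1) + (m + 1) * ((K - 1) / (m ^ 2 - 1)) * (t - u)
        = (u*(K-1) + (m+1)*((K-1)*(t-u)))/(m^2-1) := by field_simp
    rw [h3, div_le_iff₀ hm1] at hber; exact hber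
  rw [div_sub_div _ _ (by linarith : m - 1 ≠ 0) hK1.ne',
    div_le_div_iff₀ (mul_pos (by linarith : (0:ℝ) < m-1) hK1) hm1, sub_mul]
  nlinarith [mul_le_mul_of_nonneg_right hber2 (by linarith : (0:ℝ) ≤ m - 1)]

lemma my_den_pos {K : ℝ} (hK : 4 ≤ K) : 1 ≤ K + Real.logb 2 K - 5 := by
  have hl2 : (0:ℝ) < Real.log 2 := Real.log_pos (by norm_num)
  have h2 : (2:ℝ) ≤ Real.logb 2 K := by
    calc (2:ℝ) = Real.logb 2 4 := by
          rw [Real.logb, show Real.log 4 = 2*Real.log 2 by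
            rw [show (4:ℝ) = 2^(2:ℕ) by norm_num, Real.log_pow]; push_cast; ring]
          field_simp
      _ ≤ Real.logb 2 K := Real.logb_le_logb_of_le one_lt_two (by norm_num) hK
  linarith

lemma my_stepD {K m u : ℝ} (hK : 4 ≤ K) (hm : m = K/2)
    (hu : u = ((K-1)/(m^2-1)) ^ (1/m)) :
    (K-1) * (u/(m^2-1)) < 4 / (K + Real.logb 2 K - 5) := by
  have hK0 : (0:ℝ) < K := by linarith
  have hK1 : (0:ℝ) < K - 1 := by linarith
  have hm2 : 2 ≤ m := by rw [hm]; linarith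
  have hm1 : 0 < m^2 - 1 := by nlinarith
  have hbase : 0 < (K-1)/(m^2-1) := div_pos hK1 hm1
  set L := Real.log K with hL
  set l2 := Real.log 2 with hl2
  have hl2a : 0.6931471803 < l2 := Real.log_two_gt_d9
  have hl2b : l2 < 0.6931471808 := Real.log_two_lt_d9
  have hlog4 : Real.log 4 = 2 * l2 := by
    rw [show (4:ℝ) = 2^(2:ℕ) by norm_num, Real.log_pow]; push_cast; ring
  have hL4 : 2 * l2 ≤ L := by rw [← hlog4]; exact Real.log_le_log (by norm_num) hK
  have hL0 : 0 < L := by linarith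
  have hlogb : Real.logb 2 K = L / l2 := rfl
  set D := K + Real.logb 2 K - 5 with hD
  have hD1 : 1 ≤ D := my_den_pos hK
  have hD0 : 0 < D := by linarith
  set y := (L - 2*l2) * (2/K) with hy
  have hy0 : 0 ≤ y := mul_nonneg (by linarith) (by positivity)
  -- step 1 : u ≤ (4/K)^(2/K)
  have h1 : u ≤ (4/K) ^ ((2:ℝ)/K) := by
    rw [hu, show 1/m = 2/K by rw [hm]; field_simp]
    apply Real.rpow_le_rpow hbase.le _ (by positivity)
    rw [div_le_div_iff₀ hm1 hK0, hm]
    nlinarith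
  -- step 2 : (4/K)^(2/K) ≤ (1+y)⁻¹
  have h2 : (4/K) ^ ((2:ℝ)/K) ≤ (1+y)⁻¹ := by
    rw [Real.rpow_def_of_pos (by positivity)]
    have hlg : Real.log (4/K) = 2*l2 - L := by rw [Real.log_div (by norm_num) hK0.ne', hlog4]
    rw [hlg, show (2*l2 - L) * (2/K) = -y by rw [hy]; ring, Real.exp_neg]
    apply inv_anti₀ (by linarith)
    calc 1 + y ≤ Real.exp y := by linarith [Real.add_one_le_exp y]
      _ = Real.exp y := rfl
  have hu_le : u ≤ (1+y)⁻¹ := h1.trans h2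
  -- step 3 : (1+y)⁻¹ < (K^2-4)/((K-1)*D)
  have hKD : 0 < (K-1)*D := mul_pos hK1 hD0
  have hK24 : (0:ℝ) < K^2 - 4 := by nlinarith
  have h3 : (1+y)⁻¹ < (K^2-4)/((K-1)*D) := by
    rw [inv_eq_one_div, div_lt_div_iff₀ (by linarith : (0:ℝ) < 1+y) hKD, one_mul]
    -- need (K-1)*D < (K^2-4)*(1+y)
    have hDlt : D < K * (1+y) := by
      have hKy : K * (1+y) = K + 2*L - 4*l2 := by rw [hy]; field_simp; ring
      rw [hD, hlogb, hKy]
      have hd1 : L / l2 < 2 * L := by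
        rw [div_lt_iff₀ (by linarith)]; nlinarith
      have hd2 : 4 * l2 < 5 := by linarith
      linarith
    nlinarith [mul_lt_mul_of_pos_left hDlt hK1, mul_le_mul_of_nonneg_right
      (by nlinarith : K*(K-1) ≤ K^2-4) (by linarith : (0:ℝ) ≤ 1+y)]
  have hfinal : u < (K^2-4)/((K-1)*D) := lt_of_le_of_lt hu_le h3
  have hmK : m^2 - 1 = (K^2-4)/4 := by rw [hm]; ring
  clear_value D y L l2
  calc (K-1) * (u/(m^2-1)) = u * ((K-1)/(m^2-1)) := by ring
    _ < (K^2-4)/((K-1)*D) * ((K-1)/(m^2-1)) := by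
        exact mul_lt_mul_of_pos_right hfinal hbase
    _ = 4/D := by
        rw [hmK, div_mul_div_comm, div_eq_div_iff (by positivity) hD0.ne']
        ring


set_option maxHeartbeats 2000000 in
/-- For `k ≥ 4`, any admissible `q` satisfies the sharper bound
`(k-1) ∫₀¹ x^(k-2) q² < (4/(k + log₂ k - 5)) ∫₀¹ x^(k-1) q'²`. -/
theorem gpy_ratio_lt_sharper_bound (k : ℕ) (hk : 4 ≤ k) (q q' : ℝ → ℝ)
    (hloc : ∀ x ∈ Set.Ioc (0:ℝ) 1, IntervalIntegrable q' volume x 1)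
    (hq : ∀ x ∈ Set.Ioc (0:ℝ) 1, q x = -∫ t in x..1, q' t)
    (hfin : IntegrableOn (fun x => x ^ (k - 1) * (q' x) ^ 2) (Set.Ioc 0 1) volume)
    (hpos : 0 < ∫ x in Set.Ioc (0:ℝ) 1, x ^ (k - 1) * (q' x) ^ 2) :
    ((k : ℝ) - 1) * ∫ x in Set.Ioc (0:ℝ) 1, x ^ (k - 2) * (q x) ^ 2 <
      (4 / ((k : ℝ) + Real.logb 2 (k : ℝ) - 5)) *
        ∫ x in Set.Ioc (0:ℝ) 1, x ^ (k - 1) * (q' x) ^ 2 := by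
  set K : ℝ := (k : ℝ) with hKdef
  have hK : 4 ≤ K := by rw [hKdef]; exact_mod_cast hk
  have hK0 : (0:ℝ) < K := by linarith
  have hK1 : (0:ℝ) < K - 1 := by linarith
  set m : ℝ := K / 2 with hm
  set c : ℝ := m + 1 with hc
  have hm2 : 2 ≤ m := by rw [hm]; linarith
  have hm1 : (0:ℝ) < m ^ 2 - 1 := by nlinarith
  have hc3 : 3 ≤ c := by rw [hc]; linarith
  have hc1 : (0:ℝ) < c - 1 := by linarith
  have hKc : K - c = m - 1 := by rw [hc, hm]; ring
  have hKc0 : (0:ℝ) < K - c := by rw [hKc]; linarith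
  set u : ℝ := ((K-1)/(m^2-1)) ^ (1/m) with hu
  have hu0 : 0 < u := Real.rpow_pos_of_pos (div_pos hK1 hm1) _
  set Cr : ℝ := u / (m^2-1) with hCr
  have hCr0 : 0 < Cr := div_pos hu0 hm1
  have hcast1 : ((k-1:ℕ):ℝ) = K - 1 := by
    rw [hKdef]; push_cast [Nat.cast_sub (by omega : 1 ≤ k)]; ring
  have hcast2 : ((k-2:ℕ):ℝ) = K - 2 := by
    rw [hKdef]; push_cast [Nat.cast_sub (by omega : 2 ≤ k)]; ring
  set s : Set ℝ := Ioc (0:ℝ) 1 with hs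
  set I : ℝ := ∫ x in s, x ^ (k - 1) * (q' x) ^ 2 with hI
  -- the main analytic bound
  have key : (∫ x in s, x ^ (k - 2) * (q x) ^ 2) ≤ Cr * I := by
    have hsm : MeasurableSet s := measurableSet_Ioc
    set ψ : ℝ → ℝ≥0∞ := fun t => ENNReal.ofReal (t ^ c * q' t ^ 2) with hψ
    set A : ℝ → ℝ := fun x => (x ^ (1 - c) - 1) / (c - 1) with hA
    set g : ℝ → ℝ≥0∞ := fun x => ENNReal.ofReal (x ^ (K - 2) * A x) with hg
    set G : ℝ → ℝ := fun t =>
      (t ^ (K - c) / (K - c) - t ^ (K - 1) / (K - 1)) / (c - 1) with hG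
    have hAnn : ∀ x : ℝ, 0 < x → x ≤ 1 → 0 ≤ A x := by
      intro x hx0 hx1
      have h1 : x ^ (0:ℝ) ≤ x ^ (1 - c) :=
        Real.rpow_le_rpow_of_exponent_ge hx0 hx1 (by linarith)
      rw [Real.rpow_zero] at h1
      have : 0 ≤ x ^ (1-c) - 1 := by linarith
      positivity
    -- H1 : integrability of t^c * q'^2 on (x,1]
    have H1 : ∀ x ∈ s, IntegrableOn (fun t => t ^ c * q' t ^ 2) (Ioc x 1) volume := by
      intro x hx
      have hsub : Ioc x 1 ⊆ s := fun y hy => ⟨lt_trans hx.1 hy.1, hy.2⟩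
      have hq'int : IntegrableOn q' (Ioc x 1) volume := (hloc x hx).1
      have hdom : IntegrableOn
          (fun t => x ^ (c - (K - 1)) * (t ^ (k - 1) * q' t ^ 2)) (Ioc x 1) volume :=
        (hfin.mono_set hsub).const_mul _
      apply Integrable.mono' hdom
      · have hm1' : AEStronglyMeasurable (fun t : ℝ => t ^ c * (q' t * q' t))
            (volume.restrict (Ioc x 1)) :=
          ((measurable_id.pow_const c).aestronglyMeasurable).mul
            (hq'int.aestronglyMeasurable.mul hq'int.aestronglyMeasurable)
        exact hm1'.congr (Filter.Eventually.of_forall fun t => by ring)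
      · filter_upwards [ae_restrict_mem measurableSet_Ioc] with t ht
        have ht0 : 0 < t := lt_trans hx.1 ht.1
        have hnn : 0 ≤ t ^ c * q' t ^ 2 := mul_nonneg (Real.rpow_nonneg ht0.le _) (sq_nonneg _)
        rw [Real.norm_eq_abs, abs_of_nonneg hnn]
        have h1 : t ^ c = t ^ (c - (K-1)) * t ^ ((k-1:ℕ):ℝ) := by
          rw [hcast1, ← Real.rpow_add ht0]; ring_nf
        have h2 : t ^ (c - (K-1)) ≤ x ^ (c - (K-1)) :=
          Real.rpow_le_rpow_of_nonpos hx.1 ht.1.le (by rw [hc, hm]; linarith)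
        rw [h1, Real.rpow_natCast]
        calc t ^ (c-(K-1)) * t ^ (k-1) * q' t ^ 2
            = t ^ (c-(K-1)) * (t ^ (k-1) * q' t ^ 2) := by ring
          _ ≤ x ^ (c-(K-1)) * (t ^ (k-1) * q' t ^ 2) := by
              apply mul_le_mul_of_nonneg_right h2
                (mul_nonneg (pow_nonneg ht0.le _) (sq_nonneg _))
    -- H2 : pointwise Cauchy-Schwarz bound
    have H2 : ∀ x ∈ s, x ^ (K-2) * q x ^ 2 ≤
        (x ^ (K-2) * A x) * ∫ t in Ioc x 1, t ^ c * q' t ^ 2 := by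
      intro x hx
      have hx0 : 0 < x := hx.1
      have hq'int : IntegrableOn q' (Ioc x 1) volume := (hloc x hx).1
      have habs : |q x| ≤ ∫ t in Ioc x 1, |q' t| := by
        rw [hq x hx, abs_neg, ← intervalIntegral.integral_of_le hx.2]
        exact intervalIntegral.abs_integral_le_integral_abs hx.2
      have hfm : AEStronglyMeasurable (fun t : ℝ => t ^ (c/2) * |q' t|)
          (volume.restrict (Ioc x 1)) := by
        apply ((measurable_id.pow_const (c/2)).aestronglyMeasurable).mul
        exact hq'int.aestronglyMeasurable.norm.congr
          (Filter.Eventually.of_forall fun t => by simp [Real.norm_eq_abs])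
      have hgm2 : AEStronglyMeasurable (fun t : ℝ => t ^ (-(c/2)))
          (volume.restrict (Ioc x 1)) :=
        (measurable_id.pow_const (-(c/2))).aestronglyMeasurable
      have heqf : EqOn (fun t => t ^ c * q' t ^ 2) (fun t => (t ^ (c/2) * |q' t|) ^ 2)
          (Ioc x 1) := by
        intro t ht
        have ht0 : 0 < t := lt_trans hx0 ht.1
        have h1 : (t ^ (c/2)) ^ (2:ℕ) = t ^ c := by
          rw [← Real.rpow_natCast (t ^ (c/2)) 2, ← Real.rpow_mul ht0.le]
          norm_num
        simp only [mul_pow, h1, sq_abs]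
      have hf2 : Integrable (fun t => (t ^ (c/2) * |q' t|) ^ 2)
          (volume.restrict (Ioc x 1)) :=
        (H1 x hx).congr_fun heqf measurableSet_Ioc
      have heqg : EqOn (fun t : ℝ => t ^ (-c)) (fun t : ℝ => (t ^ (-(c/2))) ^ 2)
          (Ioc x 1) := by
        intro t ht
        have ht0 : 0 < t := lt_trans hx0 ht.1
        have h1 : (t ^ (-(c/2))) ^ (2:ℕ) = t ^ (-c) := by
          rw [← Real.rpow_natCast (t ^ (-(c/2))) 2, ← Real.rpow_mul ht0.le]
          norm_num
        simp only [h1]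
      have hg2 : Integrable (fun t : ℝ => (t ^ (-(c/2))) ^ 2)
          (volume.restrict (Ioc x 1)) := by
        have hgint : IntegrableOn (fun t : ℝ => t ^ (-c)) (Ioc x 1) volume := by
          apply Integrable.mono'
            (integrableOn_const measure_Ioc_lt_top.ne : IntegrableOn
              (fun _ : ℝ => x ^ (-c)) (Ioc x 1) volume)
            ((measurable_id.pow_const (-c)).aestronglyMeasurable)
          filter_upwards [ae_restrict_mem measurableSet_Ioc] with t ht
          have ht0 : 0 < t := lt_trans hx0 ht.1
          show ‖t ^ (-c)‖ ≤ x ^ (-c)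
          rw [Real.norm_eq_abs, abs_of_nonneg (Real.rpow_nonneg ht0.le _)]
          exact Real.rpow_le_rpow_of_nonpos hx0 ht.1.le (by linarith)
        exact hgint.congr_fun heqg measurableSet_Ioc
      have hfn : 0 ≤ᵐ[volume.restrict (Ioc x 1)] fun t => t ^ (c/2) * |q' t| := by
        filter_upwards [ae_restrict_mem measurableSet_Ioc] with t ht
        exact mul_nonneg (Real.rpow_nonneg (lt_trans hx0 ht.1).le _) (abs_nonneg _)
      have hgn : 0 ≤ᵐ[volume.restrict (Ioc x 1)] fun t : ℝ => t ^ (-(c/2)) := by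
        filter_upwards [ae_restrict_mem measurableSet_Ioc] with t ht
        exact Real.rpow_nonneg (lt_trans hx0 ht.1).le _
      have hcs := my_cs hfm hgm2 hf2 hg2 hfn hgn
      have hprod : ∫ t in Ioc x 1, (t ^ (c/2) * |q' t|) * t ^ (-(c/2)) =
          ∫ t in Ioc x 1, |q' t| := by
        apply setIntegral_congr_fun measurableSet_Ioc
        intro t ht
        have ht0 : 0 < t := lt_trans hx0 ht.1
        have : t ^ (c/2) * t ^ (-(c/2)) = 1 := by
          rw [← Real.rpow_add ht0]; norm_num
        calc (t ^ (c/2) * |q' t|) * t ^ (-(c/2))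
            = (t ^ (c/2) * t ^ (-(c/2))) * |q' t| := by ring
          _ = |q' t| := by rw [this, one_mul]
      have hAval : ∫ t in Ioc x 1, (t ^ (-(c/2))) ^ 2 = A x := by
        rw [← setIntegral_congr_fun measurableSet_Ioc heqg,
          ← intervalIntegral.integral_of_le hx.2]
        rw [integral_rpow (Or.inr ⟨by intro h; rw [neg_eq_iff_eq_neg] at h; linarith [h],
          fun h => absurd ((Set.uIcc_of_le hx.2 ▸ h) : (0:ℝ) ∈ Icc x 1)
            (fun hh => absurd hh.1 (not_le.2 hx0))⟩)]
        rw [Real.one_rpow, hA]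
        rw [div_eq_div_iff (by linarith : -c + 1 ≠ 0) (by linarith : c - 1 ≠ 0)]
        have : x ^ (-c + 1) = x ^ (1 - c) := by ring_nf
        rw [this]; ring
      have hB : ∫ t in Ioc x 1, (t ^ (c/2) * |q' t|) ^ 2 =
          ∫ t in Ioc x 1, t ^ c * q' t ^ 2 :=
        (setIntegral_congr_fun measurableSet_Ioc heqf).symm
      rw [hprod, hB, hAval] at hcs
      have hq2 : q x ^ 2 ≤ (∫ t in Ioc x 1, t ^ c * q' t ^ 2) * A x := by
        calc q x ^ 2 = |q x| ^ 2 := (sq_abs _).symm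
          _ ≤ (∫ t in Ioc x 1, |q' t|) ^ 2 := by
              apply pow_le_pow_left₀ (abs_nonneg _) habs
          _ ≤ (∫ t in Ioc x 1, t ^ c * q' t ^ 2) * A x := hcs
      calc x ^ (K-2) * q x ^ 2
          ≤ x ^ (K-2) * ((∫ t in Ioc x 1, t ^ c * q' t ^ 2) * A x) :=
            mul_le_mul_of_nonneg_left hq2 (Real.rpow_nonneg hx0.le _)
        _ = (x ^ (K-2) * A x) * ∫ t in Ioc x 1, t ^ c * q' t ^ 2 := by ring
    -- H3 : ENNReal version of step A
    have H3 : ∀ x ∈ s, ENNReal.ofReal (x ^ (k-2) * q x ^ 2) ≤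
        g x * ∫⁻ t in Ioc x 1, ψ t := by
      intro x hx
      have hx0 : 0 < x := hx.1
      have hnat : x ^ (k-2) * q x ^ 2 = x ^ (K-2) * q x ^ 2 := by
        rw [← Real.rpow_natCast x (k-2), hcast2]
      have hnn1 : 0 ≤ x ^ (K-2) * A x :=
        mul_nonneg (Real.rpow_nonneg hx0.le _) (hAnn x hx0 hx.2)
      have hnnae : 0 ≤ᵐ[volume.restrict (Ioc x 1)] fun t => t ^ c * q' t ^ 2 := by
        filter_upwards [ae_restrict_mem measurableSet_Ioc] with t ht
        exact mul_nonneg (Real.rpow_nonneg (lt_trans hx0 ht.1).le _) (sq_nonneg _)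
      calc ENNReal.ofReal (x ^ (k-2) * q x ^ 2)
          ≤ ENNReal.ofReal ((x ^ (K-2) * A x) * ∫ t in Ioc x 1, t ^ c * q' t ^ 2) := by
            rw [hnat]; exact ENNReal.ofReal_le_ofReal (H2 x hx)
        _ = ENNReal.ofReal (x ^ (K-2) * A x) *
              ENNReal.ofReal (∫ t in Ioc x 1, t ^ c * q' t ^ 2) :=
            ENNReal.ofReal_mul hnn1
        _ = g x * ∫⁻ t in Ioc x 1, ψ t := by
            rw [ofReal_integral_eq_lintegral_ofReal (H1 x hx) hnnae]
    -- measurability of g and ψ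
    have hgm : Measurable g := by
      apply Measurable.ennreal_ofReal
      exact (measurable_id.pow_const (K-2)).mul
        (((measurable_id.pow_const (1-c)).sub measurable_const).div_const _)
    have hψm : AEMeasurable ψ (volume.restrict s) := by
      have haem : AEMeasurable (fun t : ℝ => t ^ (k-1) * q' t ^ 2) (volume.restrict s) :=
        hfin.aestronglyMeasurable.aemeasurable
      have h0 : AEMeasurable (fun t : ℝ =>
          ENNReal.ofReal (t ^ (c - (K-1)) * (t ^ (k-1) * q' t ^ 2)))
          (volume.restrict s) :=
        (((measurable_id.pow_const (c-(K-1))).aemeasurable.mul haem)).ennreal_ofReal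
      apply h0.congr
      filter_upwards [ae_restrict_mem hsm] with t ht
      have ht0 : 0 < t := ht.1
      congr 1
      rw [← Real.rpow_natCast t (k-1), hcast1, ← mul_assoc, ← Real.rpow_add ht0]
      ring_nf
    -- the product kernel F
    set F : ℝ × ℝ → ℝ≥0∞ :=
      ({p : ℝ × ℝ | p.1 < p.2}.indicator fun p => g p.1 * ψ p.2) with hF
    have hFm : AEMeasurable F ((volume.restrict s).prod (volume.restrict s)) := by
      apply AEMeasurable.indicator _ (measurableSet_lt measurable_fst measurable_snd)
      exact (hgm.comp measurable_fst).aemeasurable.mul hψm.comp_snd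
    -- H4b : inner integral in t
    have H4b : ∀ x ∈ s, (∫⁻ t in s, F (x, t)) = g x * ∫⁻ t in Ioc x 1, ψ t := by
      intro x hx
      have h1 : (fun t => F (x, t)) = (Ioi x).indicator (fun t => g x * ψ t) := by
        funext t
        by_cases h : x < t
        · rw [hF, Set.indicator_of_mem (by exact h : (x,t) ∈ {p : ℝ × ℝ | p.1 < p.2}),
            Set.indicator_of_mem (mem_Ioi.2 h)]
        · rw [hF, Set.indicator_of_notMem (by exact h : (x,t) ∉ {p : ℝ × ℝ | p.1 < p.2}),
            Set.indicator_of_notMem (fun hh => h (mem_Ioi.1 hh))]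
      have h2 : Ioi x ∩ s = Ioc x 1 := by
        ext y
        simp only [mem_inter_iff, mem_Ioi, hs, mem_Ioc]
        exact ⟨fun ⟨h1', h2'⟩ => ⟨h1', h2'.2⟩, fun ⟨h1', h2'⟩ => ⟨h1', lt_trans hx.1 h1', h2'⟩⟩
      rw [h1, lintegral_indicator measurableSet_Ioi,
        Measure.restrict_restrict measurableSet_Ioi, h2,
        lintegral_const_mul' _ _ ENNReal.ofReal_ne_top]
    -- H4c : inner integral in x
    have H4c : ∀ t ∈ s, (∫⁻ x in s, F (x, t)) = (∫⁻ x in Ioo 0 t, g x) * ψ t := by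
      intro t ht
      have h1 : (fun x => F (x, t)) = (Iio t).indicator (fun x => g x * ψ t) := by
        funext x
        by_cases h : x < t
        · rw [hF, Set.indicator_of_mem (by exact h : (x,t) ∈ {p : ℝ × ℝ | p.1 < p.2}),
            Set.indicator_of_mem (mem_Iio.2 h)]
        · rw [hF, Set.indicator_of_notMem (by exact h : (x,t) ∉ {p : ℝ × ℝ | p.1 < p.2}),
            Set.indicator_of_notMem (fun hh => h (mem_Iio.1 hh))]
      have h2 : Iio t ∩ s = Ioo 0 t := by
        ext y
        simp only [mem_inter_iff, mem_Iio, hs, mem_Ioc, mem_Ioo]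
        exact ⟨fun ⟨h1', h2'⟩ => ⟨h2'.1, h1'⟩,
          fun ⟨h1', h2'⟩ => ⟨h2', h1', le_trans (le_of_lt h2') ht.2⟩⟩
      rw [h1, lintegral_indicator measurableSet_Iio,
        Measure.restrict_restrict measurableSet_Iio, h2,
        lintegral_mul_const' _ _ ENNReal.ofReal_ne_top]
    -- H5 : computing the integral of g on (0,t)
    have H5 : ∀ t ∈ s, (∫⁻ x in Ioo 0 t, g x) = ENNReal.ofReal (G t) := by
      intro t ht
      have ht0 : 0 < t := ht.1
      have hiio : IntegrableOn (fun x : ℝ => (x ^ (K-1-c) - x ^ (K-2)) / (c-1))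
          (Ioo 0 t) volume := by
        have h1 : IntervalIntegrable (fun x : ℝ => (x ^ (K-1-c) - x ^ (K-2)) / (c-1))
            volume 0 t :=
          ((intervalIntegral.intervalIntegrable_rpow' (by rw [hc, hm]; linarith)).sub
            (intervalIntegral.intervalIntegrable_rpow' (by linarith))).div_const _
        exact ((intervalIntegrable_iff_integrableOn_Ioc_of_le ht0.le).1 h1).mono_set
          Ioo_subset_Ioc_self
      have heqon : EqOn (fun x : ℝ => (x ^ (K-1-c) - x ^ (K-2)) / (c-1))
          (fun x => x ^ (K-2) * A x) (Ioo 0 t) := by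
        intro x hx
        have hx0 : 0 < x := hx.1
        have h1 : x ^ (K-1-c) = x ^ (K-2) * x ^ (1-c) := by
          rw [← Real.rpow_add hx0]; ring_nf
        simp only [hA, h1]; ring
      have hint2 : IntegrableOn (fun x => x ^ (K-2) * A x) (Ioo 0 t) volume :=
        hiio.congr_fun heqon measurableSet_Ioo
      have hnnae : 0 ≤ᵐ[volume.restrict (Ioo 0 t)] fun x => x ^ (K-2) * A x := by
        filter_upwards [ae_restrict_mem measurableSet_Ioo] with x hx
        exact mul_nonneg (Real.rpow_nonneg hx.1.le _)
          (hAnn x hx.1 (le_trans hx.2.le ht.2))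
      rw [hg]
      rw [← ofReal_integral_eq_lintegral_ofReal hint2 hnnae]
      congr 1
      rw [← setIntegral_congr_fun measurableSet_Ioo heqon,
        ← integral_Ioc_eq_integral_Ioo, ← intervalIntegral.integral_of_le ht0.le]
      rw [intervalIntegral.integral_div]
      rw [intervalIntegral.integral_sub
        (intervalIntegral.intervalIntegrable_rpow' (by rw [hc, hm]; linarith))
        (intervalIntegral.intervalIntegrable_rpow' (by linarith))]
      rw [integral_rpow (Or.inl (by rw [hc, hm]; linarith)),
        integral_rpow (Or.inl (by linarith))]
      rw [Real.zero_rpow (by rw [hc, hm]; intro h; linarith),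
        Real.zero_rpow (by intro h; linarith)]
      rw [hG]
      have e1 : K - 1 - c + 1 = K - c := by ring
      have e2 : K - 2 + 1 = K - 1 := by ring
      rw [e1, e2]
      ring
    -- H6 : pointwise bound by the constant
    have H6 : ∀ t ∈ s, ψ t * ENNReal.ofReal (G t) ≤
        ENNReal.ofReal (t ^ (k-1) * q' t ^ 2) * ENNReal.ofReal Cr := by
      intro t ht
      have ht0 : 0 < t := ht.1
      have hstep := my_stepC hK hm hu ht0
      have hht : (t / (K-c) - t ^ c / (K-1)) / (c-1) ≤ Cr := by
        rw [hKc, show c - 1 = m from by rw [hc]; ring, hCr]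
        rw [div_le_iff₀ (by linarith : (0:ℝ) < m)]
        have : t ^ c = t ^ (m+1) := by rw [hc]
        rw [this]
        calc t / (m-1) - t ^ (m+1) / (K-1) ≤ m * u / (m^2-1) := hstep
          _ = u / (m^2-1) * m := by ring
      have hPQ : t ^ c * t ^ (K-c) = t ^ (K-1) * t := by
        rw [← Real.rpow_add ht0, ← Real.rpow_add_one ht0.ne']
        norm_num
      have hreal : t ^ c * q' t ^ 2 * G t =
          (t ^ (k-1) * q' t ^ 2) * ((t / (K-c) - t ^ c / (K-1)) / (c-1)) := by
        rw [← Real.rpow_natCast t (k-1), hcast1, hG]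
        have hKc' : K - c ≠ 0 := hKc0.ne'
        have hK1' : K - 1 ≠ 0 := hK1.ne'
        have hc1' : c - 1 ≠ 0 := hc1.ne'
        field_simp
        linear_combination (q' t ^ 2 * (K-1)) * hPQ
      have hnn : 0 ≤ t ^ c * q' t ^ 2 :=
        mul_nonneg (Real.rpow_nonneg ht0.le _) (sq_nonneg _)
      have hnn2 : 0 ≤ t ^ (k-1) * q' t ^ 2 :=
        mul_nonneg (pow_nonneg ht0.le _) (sq_nonneg _)
      calc ψ t * ENNReal.ofReal (G t)
          = ENNReal.ofReal (t ^ c * q' t ^ 2 * G t) := (ENNReal.ofReal_mul hnn).symm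
        _ = ENNReal.ofReal ((t ^ (k-1) * q' t ^ 2) *
              ((t / (K-c) - t ^ c / (K-1)) / (c-1))) := by rw [hreal]
        _ ≤ ENNReal.ofReal ((t ^ (k-1) * q' t ^ 2) * Cr) :=
            ENNReal.ofReal_le_ofReal (mul_le_mul_of_nonneg_left hht hnn2)
        _ = ENNReal.ofReal (t ^ (k-1) * q' t ^ 2) * ENNReal.ofReal Cr :=
            ENNReal.ofReal_mul hnn2
    -- the chain of (l)integral (in)equalities
    have hnnI : 0 ≤ᵐ[volume.restrict s] fun t : ℝ => t ^ (k-1) * q' t ^ 2 := by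
      filter_upwards [ae_restrict_mem hsm] with t ht
      exact mul_nonneg (pow_nonneg ht.1.le _) (sq_nonneg _)
    have hlin : (∫⁻ x in s, ENNReal.ofReal (x ^ (k-2) * q x ^ 2)) ≤
        ENNReal.ofReal (Cr * I) := by
      calc ∫⁻ x in s, ENNReal.ofReal (x ^ (k-2) * q x ^ 2)
          ≤ ∫⁻ x in s, g x * ∫⁻ t in Ioc x 1, ψ t :=
            lintegral_mono_ae ((ae_restrict_mem hsm).mono fun x hx => H3 x hx)
        _ = ∫⁻ x in s, ∫⁻ t in s, F (x, t) :=
            lintegral_congr_ae ((ae_restrict_mem hsm).mono fun x hx => (H4b x hx).symm)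
        _ = ∫⁻ t in s, ∫⁻ x in s, F (x, t) := lintegral_lintegral_swap hFm
        _ = ∫⁻ t in s, (∫⁻ x in Ioo 0 t, g x) * ψ t :=
            lintegral_congr_ae ((ae_restrict_mem hsm).mono fun t ht => H4c t ht)
        _ = ∫⁻ t in s, ψ t * ENNReal.ofReal (G t) :=
            lintegral_congr_ae ((ae_restrict_mem hsm).mono fun t ht => by
              simp only [H5 t ht, mul_comm])
        _ ≤ ∫⁻ t in s, ENNReal.ofReal (t ^ (k-1) * q' t ^ 2) * ENNReal.ofReal Cr :=
            lintegral_mono_ae ((ae_restrict_mem hsm).mono fun t ht => H6 t ht)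
        _ = (∫⁻ t in s, ENNReal.ofReal (t ^ (k-1) * q' t ^ 2)) * ENNReal.ofReal Cr :=
            lintegral_mul_const' _ _ ENNReal.ofReal_ne_top
        _ = ENNReal.ofReal I * ENNReal.ofReal Cr := by
            rw [← ofReal_integral_eq_lintegral_ofReal hfin hnnI]
        _ = ENNReal.ofReal (Cr * I) := by
            rw [mul_comm, ← ENNReal.ofReal_mul hCr0.le]
    -- convert back to a Bochner integral bound
    by_cases hint : IntegrableOn (fun x => x ^ (k-2) * q x ^ 2) s volume
    · have hnnq : 0 ≤ᵐ[volume.restrict s] fun x => x ^ (k-2) * q x ^ 2 := by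
        filter_upwards [ae_restrict_mem hsm] with x hx
        exact mul_nonneg (pow_nonneg hx.1.le _) (sq_nonneg _)
      have heq := ofReal_integral_eq_lintegral_ofReal hint hnnq
      rw [← heq] at hlin
      exact (ENNReal.ofReal_le_ofReal_iff (by positivity)).1 hlin
    · rw [integral_undef hint]
      positivity

  have hD := my_den_pos hK
  have hstepD : (K - 1) * Cr < 4 / (K + Real.logb 2 K - 5) := my_stepD hK hm hu
  have hJ0 : 0 ≤ ∫ x in s, x ^ (k - 2) * (q x) ^ 2 := by
    apply setIntegral_nonneg measurableSet_Ioc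
    intro x hx; exact mul_nonneg (pow_nonneg hx.1.le _) (sq_nonneg _)
  calc (K - 1) * ∫ x in s, x ^ (k - 2) * (q x) ^ 2
      ≤ (K - 1) * (Cr * I) := by
        apply mul_le_mul_of_nonneg_left key (by linarith)
    _ = ((K - 1) * Cr) * I := by ring
    _ < (4 / (K + Real.logb 2 K - 5)) * I := mul_lt_mul_of_pos_right hstepD hpos
end

section
/- Let n ≥ 2 be an integer and let q' : (0,1] → ℝ be measurable with L := ∫₀¹ t^n q'(t)² dt < ∞. Define q(x) := −∫_x^1 q'(t) dt. Then q is well defined and absolutely continuous on compact subintervals of (0,1], it satisfies q(x)² ≤ (L/(n−1)) · x^{1−n} for all x ∈ (0,1], and ∫₀¹ n x^{n−1} q(x)² dx ≤ (n/(n−1)) · L. -/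
open MeasureTheory Set


private lemma cs_aux {A B C : ℝ} (hA : 0 ≤ A) (hB : 0 ≤ B) (hC : 0 ≤ C)
    (h : ∀ ε : ℝ, 0 < ε → 2 * C ≤ ε * A + B / ε) : C ^ 2 ≤ A * B := by
  rcases hC.eq_or_lt with h0 | h0
  · simpa [← h0] using mul_nonneg hA hB
  rcases hA.eq_or_lt with hA0 | hA0
  · exfalso
    have hB1 : (0:ℝ) < B + 1 := by linarith
    have h2 := h ((B + 1) / C) (by positivity)
    rw [← hA0, mul_zero, zero_add, div_div_eq_mul_div] at h2
    rw [le_div_iff₀ hB1] at h2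
    nlinarith [mul_nonneg hB h0.le]
  · have h2 := h (C / A) (by positivity)
    have e1 : C / A * A = C := div_mul_cancel₀ _ (ne_of_gt hA0)
    have e2 : B / (C / A) = B * A / C := by field_simp
    rw [e1, e2] at h2
    have h3 : C ≤ B * A / C := by linarith
    rw [le_div_iff₀ h0] at h3
    nlinarith

private lemma amgm_aux {t w ε : ℝ} (ht : 0 < t) (hε : 0 < ε) (n : ℕ) :
    2 * |w| ≤ ε * t ^ (-(n:ℤ)) + t ^ n * w ^ 2 / ε := by
  have hv : (0:ℝ) < t ^ n := pow_pos ht n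
  have hz : t ^ (-(n:ℤ)) = (t ^ n)⁻¹ := by rw [zpow_neg, zpow_natCast]
  rw [hz]
  have h1 : 2 * |w| ≤ (ε^2 + (t^n)^2 * w^2) / (ε * t^n) := by
    rw [le_div_iff₀ (by positivity)]
    nlinarith [sq_nonneg (ε - t^n * |w|), sq_abs w, abs_nonneg w]
  refine h1.trans (le_of_eq ?_)
  field_simp


private lemma meas_aux {q' : ℝ → ℝ} (hmeas : Measurable q') :
    StronglyMeasurable (fun x : ℝ => ∫ t in Ioc x 1, q' t) := by
  have hF : StronglyMeasurable (fun p : ℝ × ℝ =>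
      Set.indicator {p : ℝ × ℝ | p.1 < p.2 ∧ p.2 ≤ 1} (fun p => q' p.2) p) := by
    apply Measurable.stronglyMeasurable
    exact Measurable.indicator (hmeas.comp measurable_snd)
      ((measurableSet_lt measurable_fst measurable_snd).inter
        (measurableSet_le measurable_snd measurable_const))
  have h2 := hF.integral_prod_right' (ν := volume)
  have heq : (fun x : ℝ => ∫ t in Ioc x 1, q' t)
      = fun x => ∫ y, Set.indicator {p : ℝ × ℝ | p.1 < p.2 ∧ p.2 ≤ 1}
          (fun p => q' p.2) (x, y) := by
    funext x
    rw [← integral_indicator measurableSet_Ioc]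
    have : (Ioc x 1).indicator q' = fun y => Set.indicator
        {p : ℝ × ℝ | p.1 < p.2 ∧ p.2 ≤ 1} (fun p => q' p.2) (x, y) := by
      funext y
      by_cases h : y ∈ Ioc x 1 <;>
        simp_all [Set.indicator_apply, Set.mem_Ioc, Set.mem_setOf_eq]
    rw [this]
  rw [heq]
  exact h2

/-- Let `n ≥ 2` and let `q'` be measurable with
`L := ∫₀¹ tⁿ q'(t)² dt < ∞`.  Then `q x := -∫_x^1 q'(t) dt` is well defined
(the integrals converge), `q` is an indefinite integral of `q'` on compact subintervals of
`(0,1]` (hence absolutely continuous there), `q(x)² ≤ (L/(n-1)) x^(1-n)` on `(0,1]`,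
and `∫₀¹ n x^(n-1) q(x)² dx ≤ (n/(n-1)) L`. -/

theorem gpy_primitive_bounds (n : ℕ) (hn : 2 ≤ n) (q' : ℝ → ℝ) (hmeas : Measurable q')
    (hL : IntegrableOn (fun t => t ^ n * (q' t) ^ 2) (Set.Ioc 0 1) volume) :
    (∀ x ∈ Set.Ioc (0:ℝ) 1, IntervalIntegrable q' volume x 1) ∧
    (∀ a ∈ Set.Ioc (0:ℝ) 1, ∀ b ∈ Set.Ioc (0:ℝ) 1, a ≤ b →
      (-∫ t in b..1, q' t) - (-∫ t in a..1, q' t) = ∫ t in a..b, q' t) ∧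
    (∀ x ∈ Set.Ioc (0:ℝ) 1,
      (-∫ t in x..1, q' t) ^ 2 ≤
        ((∫ t in Set.Ioc (0:ℝ) 1, t ^ n * (q' t) ^ 2) / ((n : ℝ) - 1)) * x ^ ((1 : ℤ) - n)) ∧
    IntegrableOn (fun x => (n : ℝ) * x ^ (n - 1) * (-∫ t in x..1, q' t) ^ 2)
      (Set.Ioc 0 1) volume ∧
    ∫ x in Set.Ioc (0:ℝ) 1, (n : ℝ) * x ^ (n - 1) * (-∫ t in x..1, q' t) ^ 2 ≤
      ((n : ℝ) / ((n : ℝ) - 1)) * ∫ t in Set.Ioc (0:ℝ) 1, t ^ n * (q' t) ^ 2 := by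
  set L : ℝ := ∫ t in Set.Ioc (0:ℝ) 1, t ^ n * (q' t) ^ 2 with hLdef
  have hn1 : (0:ℝ) < (n:ℝ) - 1 := by
    have : (2:ℝ) ≤ n := by exact_mod_cast hn
    linarith
  have hLnn : 0 ≤ L :=
    setIntegral_nonneg measurableSet_Ioc (fun t ht => by have := ht.1; positivity)
  -- integrability of q' on Ioc x 1
  have hint : ∀ x ∈ Set.Ioc (0:ℝ) 1, IntegrableOn q' (Ioc x 1) volume := by
    rintro x ⟨hx0, hx1⟩
    have hxn : (0:ℝ) < x ^ n := pow_pos hx0 n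
    have hsub : Ioc x 1 ⊆ Ioc (0:ℝ) 1 := Ioc_subset_Ioc_left hx0.le
    have hdom : IntegrableOn
        (fun t => (1 + (x ^ n)⁻¹ * (t ^ n * (q' t) ^ 2)) / 2) (Ioc x 1) volume := by
      refine Integrable.div_const (Integrable.add ?_ ((hL.mono_set hsub).const_mul _)) 2
      exact integrableOn_const measure_Ioc_lt_top.ne
    refine hdom.mono' hmeas.aestronglyMeasurable
      ((ae_restrict_iff' measurableSet_Ioc).2 (ae_of_all _ ?_))
    rintro t ⟨ht0, ht1⟩
    have h1 : x ^ n ≤ t ^ n := pow_le_pow_left₀ hx0.le ht0.le n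
    have h2 : (1:ℝ) ≤ (x ^ n)⁻¹ * t ^ n := by
      rw [← inv_mul_cancel₀ (ne_of_gt hxn)]
      exact mul_le_mul_of_nonneg_left h1 (inv_nonneg.2 hxn.le)
    have h3 := mul_le_mul_of_nonneg_right h2 (sq_nonneg (q' t))
    rw [Real.norm_eq_abs]
    nlinarith [sq_nonneg (|q' t| - 1), sq_abs (q' t)]
  have hII : ∀ x ∈ Set.Ioc (0:ℝ) 1, IntervalIntegrable q' volume x 1 := fun x hx =>
    (intervalIntegrable_iff_integrableOn_Ioc_of_le hx.2).2 (hint x hx)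
  -- key pointwise bound
  have key : ∀ x ∈ Set.Ioc (0:ℝ) 1,
      (-∫ t in x..1, q' t) ^ 2 ≤ (L / ((n : ℝ) - 1)) * x ^ ((1 : ℤ) - n) := by
    rintro x hx
    obtain ⟨hx0, hx1⟩ := hx
    have hsub : Ioc x 1 ⊆ Ioc (0:ℝ) 1 := Ioc_subset_Ioc_left hx0.le
    set C : ℝ := ∫ t in Ioc x 1, |q' t| with hCdef
    set A : ℝ := ∫ t in Ioc x 1, t ^ (-(n:ℤ)) with hAdef
    set B : ℝ := ∫ t in Ioc x 1, t ^ n * (q' t) ^ 2 with hBdef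
    have hCint : IntegrableOn (fun t => |q' t|) (Ioc x 1) volume := (hint x ⟨hx0, hx1⟩).abs
    have hnot : (0:ℝ) ∉ Set.uIcc x 1 := by
      rw [Set.uIcc_of_le hx1, Set.mem_Icc]
      rintro ⟨h, -⟩; linarith
    have hAII : IntervalIntegrable (fun t : ℝ => t ^ (-(n:ℤ))) volume x 1 :=
      intervalIntegral.intervalIntegrable_zpow (Or.inr hnot)
    have hAint : IntegrableOn (fun t : ℝ => t ^ (-(n:ℤ))) (Ioc x 1) volume :=
      (intervalIntegrable_iff_integrableOn_Ioc_of_le hx1).1 hAII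
    have hBint : IntegrableOn (fun t => t ^ n * (q' t) ^ 2) (Ioc x 1) volume :=
      hL.mono_set hsub
    have hCnn : 0 ≤ C := setIntegral_nonneg measurableSet_Ioc fun t _ => abs_nonneg _
    have hAnn : 0 ≤ A := setIntegral_nonneg measurableSet_Ioc fun t ht =>
      zpow_nonneg (le_trans hx0.le ht.1.le) _
    have hBnn : 0 ≤ B := setIntegral_nonneg measurableSet_Ioc fun t ht => by
      have := lt_trans hx0 ht.1; positivity
    have hcs : C ^ 2 ≤ A * B := by
      refine cs_aux hAnn hBnn hCnn fun ε hε => ?_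
      have hmono : ∫ t in Ioc x 1, 2 * |q' t| ≤
          ∫ t in Ioc x 1, (ε * t ^ (-(n:ℤ)) + t ^ n * (q' t) ^ 2 / ε) := by
        refine setIntegral_mono_on (hCint.const_mul 2)
          ((hAint.const_mul ε).add (hBint.div_const ε)) measurableSet_Ioc ?_
        rintro t ⟨ht0, ht1⟩
        exact amgm_aux (lt_trans hx0 ht0) hε n
      rw [integral_const_mul] at hmono
      rw [integral_add (hAint.const_mul ε) (hBint.div_const ε),
        integral_const_mul, integral_div] at hmono
      exact hmono
    have hqC : (-∫ t in x..1, q' t) ^ 2 ≤ C ^ 2 := by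
      rw [neg_pow, ← sq_abs (∫ t in x..1, q' t)]
      have hle : |∫ t in x..1, q' t| ≤ C := by
        have h5 : (∫ t in x..1, |q' t|) = C := intervalIntegral.integral_of_le hx1
        exact le_trans (intervalIntegral.abs_integral_le_integral_abs (f := q')
          (μ := volume) hx1) (le_of_eq h5)
      simpa using pow_le_pow_left₀ (abs_nonneg _) hle 2
    -- bound A
    have hAval : A = (1 - x ^ ((1:ℤ) - n)) / ((1:ℝ) - n) := by
      rw [hAdef, ← intervalIntegral.integral_of_le hx1,
        integral_zpow (Or.inr ⟨by omega, hnot⟩)]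
      have h1 : -(n:ℤ) + 1 = 1 - n := by ring
      rw [h1]
      push_cast
      rw [one_zpow]
      ring
    have hxz : (0:ℝ) < x ^ ((1:ℤ) - n) := zpow_pos hx0 _
    have hA_le : A ≤ x ^ ((1:ℤ) - n) / ((n:ℝ) - 1) := by
      rw [hAval]
      have h2 : (1 - x ^ ((1:ℤ) - n)) / ((1:ℝ) - n)
          = (x ^ ((1:ℤ) - n) - 1) / ((n:ℝ) - 1) := by
        rw [div_eq_div_iff (ne_of_lt (by linarith : (1:ℝ) - (n:ℝ) < 0)) hn1.ne']
        ring
      rw [h2]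
      gcongr
      linarith
    have hB_le : B ≤ L := by
      refine setIntegral_mono_set hL ?_ (HasSubset.Subset.eventuallyLE hsub)
      exact (ae_restrict_iff' measurableSet_Ioc).2 (ae_of_all _ fun t ht => by
        have := ht.1; positivity)
    calc (-∫ t in x..1, q' t) ^ 2 ≤ C ^ 2 := hqC
      _ ≤ A * B := hcs
      _ ≤ (x ^ ((1:ℤ) - n) / ((n:ℝ) - 1)) * L := by
          exact mul_le_mul hA_le hB_le hBnn (by positivity)
      _ = (L / ((n : ℝ) - 1)) * x ^ ((1 : ℤ) - n) := by ring
  -- measurable version of the integrand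
  set g : ℝ → ℝ := fun x => (n : ℝ) * x ^ (n - 1) * (-∫ t in Ioc x 1, q' t) ^ 2 with hgdef
  have hgmeas : StronglyMeasurable g := by
    apply Measurable.stronglyMeasurable
    exact (measurable_const.mul (measurable_id.pow_const _)).mul
      (((meas_aux hmeas).measurable.neg).pow_const 2)
  have hEq : EqOn g (fun x => (n : ℝ) * x ^ (n - 1) * (-∫ t in x..1, q' t) ^ 2)
      (Set.Ioc 0 1) := by
    intro x hx
    simp only [hgdef]
    rw [intervalIntegral.integral_of_le hx.2]
  have hxpow : ∀ x ∈ Set.Ioc (0:ℝ) 1, x ^ (n - 1) * x ^ ((1:ℤ) - n) = 1 := by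
    rintro x ⟨hx0, _⟩
    rw [← zpow_natCast x (n - 1), ← zpow_add₀ (ne_of_gt hx0)]
    have h1 : ((n - 1 : ℕ) : ℤ) + ((1:ℤ) - n) = 0 := by
      have : ((n - 1 : ℕ) : ℤ) = (n : ℤ) - 1 := by
        push_cast [Nat.cast_sub (show 1 ≤ n by omega)]; ring
      rw [this]; ring
    rw [h1, zpow_zero]
  have hbound : ∀ x ∈ Set.Ioc (0:ℝ) 1, ‖g x‖ ≤ (n : ℝ) * (L / ((n : ℝ) - 1)) := by
    intro x hx
    have hgx : g x = (n : ℝ) * x ^ (n - 1) * (-∫ t in x..1, q' t) ^ 2 := hEq hx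
    have hk := key x hx
    have hxp : (0:ℝ) ≤ x ^ (n - 1) := pow_nonneg hx.1.le _
    rw [Real.norm_eq_abs, hgx, abs_of_nonneg (by positivity)]
    calc (n : ℝ) * x ^ (n - 1) * (-∫ t in x..1, q' t) ^ 2
        ≤ (n : ℝ) * x ^ (n - 1) * ((L / ((n : ℝ) - 1)) * x ^ ((1:ℤ) - n)) := by
          exact mul_le_mul_of_nonneg_left hk (by positivity)
      _ = (n : ℝ) * (L / ((n : ℝ) - 1)) * (x ^ (n - 1) * x ^ ((1:ℤ) - n)) := by ring
      _ = (n : ℝ) * (L / ((n : ℝ) - 1)) := by rw [hxpow x hx, mul_one]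
  have hgint : IntegrableOn g (Set.Ioc 0 1) volume := by
    refine Integrable.mono' (integrableOn_const measure_Ioc_lt_top.ne)
      hgmeas.aestronglyMeasurable
      ((ae_restrict_iff' measurableSet_Ioc).2 (ae_of_all _ hbound))
  have hfint : IntegrableOn (fun x => (n : ℝ) * x ^ (n - 1) * (-∫ t in x..1, q' t) ^ 2)
      (Set.Ioc 0 1) volume := hgint.congr_fun hEq measurableSet_Ioc
  refine ⟨hII, ?_, key, hfint, ?_⟩
  · rintro a ha b hb hab
    have h1 : IntervalIntegrable q' volume a b := by
      refine (intervalIntegrable_iff_integrableOn_Ioc_of_le hab).2 ?_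
      exact (hint a ha).mono_set (Ioc_subset_Ioc_right hb.2)
    have h2 : IntervalIntegrable q' volume b 1 := hII b hb
    have := intervalIntegral.integral_add_adjacent_intervals h1 h2
    linarith
  · calc ∫ x in Set.Ioc (0:ℝ) 1, (n : ℝ) * x ^ (n - 1) * (-∫ t in x..1, q' t) ^ 2
        ≤ ∫ _x in Set.Ioc (0:ℝ) 1, (n : ℝ) * (L / ((n : ℝ) - 1)) := by
          refine setIntegral_mono_on hfint
            (integrableOn_const measure_Ioc_lt_top.ne) measurableSet_Ioc ?_
          intro x hx
          calc (n : ℝ) * x ^ (n - 1) * (-∫ t in x..1, q' t) ^ 2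
              = g x := (hEq hx).symm
            _ ≤ ‖g x‖ := le_abs_self _
            _ ≤ (n : ℝ) * (L / ((n : ℝ) - 1)) := hbound x hx
      _ = (n : ℝ) * (L / ((n : ℝ) - 1)) := by
          rw [setIntegral_const, measureReal_def, Real.volume_Ioc]
          norm_num
      _ = ((n : ℝ) / ((n : ℝ) - 1)) * L := by ring
end

section
/- Let k ≥ 4 be an integer, n := k−1, K(x,y) := (min(x,y)/max(x,y))^{n/2} on [0,1]² (with K(0,0) := 0), and T the integral operator (Tf)(x) := ∫₀¹ f(y) K(x,y) dy on L²[0,1]. If φ ∈ L²[0,1] is an eigenfunction of T for a nonzero eigenvalue, then φ has a representative that is continuous on [0,1] with φ(0) = 0; moreover, setting q(x) := −∫_x^1 t^{−n/2} φ(t) dt for x ∈ (0,1], the functions x ↦ x^{n/2} q'(x) and x ↦ x^{n/2−1} q(x) both extend continuously to [0,1] with value 0 at x = 0. -/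
open MeasureTheory Set Filter Topology

/-- The GPY kernel `K(x,y) = (min(x,y)/max(x,y))^(n/2)` (with `K(0,0) = 0`,
which holds automatically by Lean's conventions `0/0 = 0`, `0^(positive) = 0`). -/
noncomputable def gpyKernel (n : ℕ) (x y : ℝ) : ℝ := (min x y / max x y) ^ ((n : ℝ) / 2)

/-- Lebesgue measure restricted to `[0,1]`. -/
noncomputable def mu01 : Measure ℝ := volume.restrict (Set.Icc 0 1)

/-- Let `k ≥ 4`, `n := k-1`, and let `T` be the GPY integral operator on
`L²[0,1]`.  Every eigenfunction `φ` of `T` for a nonzero eigenvalue has a representative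
`g` continuous on `[0,1]` with `g 0 = 0`; moreover, with
`q(x) := -∫_x^1 t^(-n/2) g(t) dt`, the functions `x ↦ x^(n/2) q'(x)` and
`x ↦ x^(n/2-1) q(x)` extend continuously to `[0,1]` with value `0` at `0`. -/
theorem gpy_eigenfunction_continuous_representative (k : ℕ) (hk : 4 ≤ k)
    (T : Lp ℝ 2 mu01 →L[ℝ] Lp ℝ 2 mu01)
    (hT : ∀ f : Lp ℝ 2 mu01,
      (T f : ℝ → ℝ) =ᵐ[mu01] fun x => ∫ y in Set.Icc (0:ℝ) 1, f y * gpyKernel (k - 1) x y)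
    (φ : Lp ℝ 2 mu01) (lam : ℝ) (hlam : lam ≠ 0) (hφ : φ ≠ 0) (heig : T φ = lam • φ) :
    ∃ g : ℝ → ℝ, (φ : ℝ → ℝ) =ᵐ[mu01] g ∧ ContinuousOn g (Set.Icc 0 1) ∧ g 0 = 0 ∧
      (∃ h : ℝ → ℝ, ContinuousOn h (Set.Icc 0 1) ∧ h 0 = 0 ∧
        ∀ x ∈ Set.Ioc (0:ℝ) 1,
          h x = x ^ (((k : ℝ) - 1) / 2) *
            deriv (fun z => -∫ t in z..1, t ^ (-((k : ℝ) - 1) / 2) * g t) x) ∧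
      (∃ h : ℝ → ℝ, ContinuousOn h (Set.Icc 0 1) ∧ h 0 = 0 ∧
        ∀ x ∈ Set.Ioc (0:ℝ) 1,
          h x = x ^ (((k : ℝ) - 1) / 2 - 1) *
            (-∫ t in x..1, t ^ (-((k : ℝ) - 1) / 2) * g t)) := by
  have hk4 : (4:ℝ) ≤ (k:ℝ) := by exact_mod_cast hk
  set ν : ℝ := ((k:ℝ) - 1) / 2 with hν_def
  have hν1 : 1 < ν := by rw [hν_def]; linarith
  have hν0 : 0 < ν := by linarith
  have hcast : ((k - 1 : ℕ) : ℝ) = (k:ℝ) - 1 := by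
    have h1 : (1:ℕ) ≤ k := by omega
    push_cast [Nat.cast_sub h1]; ring
  have hker : ∀ x y : ℝ, gpyKernel (k-1) x y = (min x y / max x y) ^ ν := by
    intro x y; rw [gpyKernel, hcast]
  have he : -((k : ℝ) - 1) / 2 = -ν := by rw [hν_def]; ring
  haveI : IsFiniteMeasure mu01 := by
    constructor
    rw [mu01, Measure.restrict_apply_univ, Real.volume_Icc]
    norm_num
  have hφint : Integrable (φ : ℝ → ℝ) mu01 := (Lp.memLp φ).integrable (by norm_num)
  -- a.e. facts
  have hae : ∀ᵐ y ∂mu01, y ∈ Ioc (0:ℝ) 1 := by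
    have h1 : ∀ᵐ y ∂mu01, y ∈ Icc (0:ℝ) 1 := by
      rw [mu01]; exact ae_restrict_mem measurableSet_Icc
    have h0 : mu01 {(0:ℝ)} = 0 := by
      rw [mu01, Measure.restrict_apply (measurableSet_singleton 0)]
      exact measure_mono_null Set.inter_subset_left (by simp)
    have h2 : ∀ᵐ y ∂mu01, y ≠ 0 := by
      rw [ae_iff]
      simpa using h0
    filter_upwards [h1, h2] with y hy1 hy2
    exact ⟨lt_of_le_of_ne hy1.1 (Ne.symm hy2), hy1.2⟩
  -- the continuous representative
  set g : ℝ → ℝ :=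
    fun x => lam⁻¹ * ∫ y, (φ : ℝ → ℝ) y * ((min x y / max x y) ^ ν) ∂mu01 with hg_def
  have hg_eq : ∀ x : ℝ,
      g x = lam⁻¹ * ∫ y in Set.Icc (0:ℝ) 1, (φ : ℝ → ℝ) y * gpyKernel (k-1) x y := by
    intro x
    rw [hg_def]
    simp only [hker]
    rfl
  -- continuity of g from the right half-line
  have hgc : ∀ x₀ : ℝ, 0 ≤ x₀ → ContinuousWithinAt g (Ici 0) x₀ := by
    intro x₀ hx₀
    refine ContinuousWithinAt.mul continuousWithinAt_const ?_
    apply continuousWithinAt_of_dominated (bound := fun y => |(φ : ℝ → ℝ) y|)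
    · refine Eventually.of_forall fun x => ?_
      exact (Lp.aestronglyMeasurable φ).mul
        ((by fun_prop : Measurable fun y : ℝ => (min x y / max x y) ^ ν).aestronglyMeasurable)
    · filter_upwards [eventually_mem_nhdsWithin] with x hx
      filter_upwards [hae] with y hy
      have hy0 : 0 < y := hy.1
      have hmax : 0 < max x y := lt_of_lt_of_le hy0 (le_max_right x y)
      have hq0 : 0 ≤ min x y / max x y := div_nonneg (le_min hx hy0.le) hmax.le
      have hq1 : min x y / max x y ≤ 1 := (div_le_one hmax).mpr (min_le_max)
      have hK0 : 0 ≤ (min x y / max x y) ^ ν := Real.rpow_nonneg hq0 ν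
      have hK1 : (min x y / max x y) ^ ν ≤ 1 := Real.rpow_le_one hq0 hq1 hν0.le
      rw [Real.norm_eq_abs, abs_mul]
      calc |(φ : ℝ → ℝ) y| * |(min x y / max x y) ^ ν|
          ≤ |(φ : ℝ → ℝ) y| * 1 := by
            apply mul_le_mul_of_nonneg_left _ (abs_nonneg _)
            rw [abs_of_nonneg hK0]; exact hK1
        _ = |(φ : ℝ → ℝ) y| := mul_one _
    · exact hφint.abs
    · filter_upwards [hae] with y hy
      have hy0 : 0 < y := hy.1
      have hcont : ContinuousAt (fun x => (min x y / max x y) ^ ν) x₀ := by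
        apply ContinuousAt.rpow_const _ (Or.inr hν0.le)
        exact ((continuous_id.min continuous_const).continuousAt).div
          ((continuous_id.max continuous_const).continuousAt)
          (ne_of_gt (lt_of_lt_of_le hy0 (le_max_right x₀ y)))
      exact (continuousAt_const.mul hcont).continuousWithinAt
  have hgcOn : ContinuousOn g (Set.Icc 0 1) :=
    fun x hx => (hgc x hx.1).mono Icc_subset_Ici_self
  -- g 0 = 0
  have hg0 : g 0 = 0 := by
    have hz : ∀ᵐ y ∂mu01, (φ : ℝ → ℝ) y * ((min (0:ℝ) y / max 0 y) ^ ν) = (0:ℝ) := by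
      filter_upwards [hae] with y hy
      rw [min_eq_left hy.1.le, zero_div, Real.zero_rpow hν0.ne', mul_zero]
    have h00 : g 0 = lam⁻¹ * ∫ y, (φ : ℝ → ℝ) y * ((min (0:ℝ) y / max 0 y) ^ ν) ∂mu01 := rfl
    rw [h00, integral_congr_ae hz, integral_zero, mul_zero]
  -- φ = g a.e.
  have hφg : (φ : ℝ → ℝ) =ᵐ[mu01] g := by
    have h1 := hT φ
    have h2 : ((T φ : Lp ℝ 2 mu01) : ℝ → ℝ) =ᵐ[mu01] fun x => lam * (φ : ℝ → ℝ) x := by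
      rw [heig]
      filter_upwards [Lp.coeFn_smul lam φ] with x hx
      simpa using hx
    filter_upwards [h1, h2] with x hx1 hx2
    have h3 : lam * (φ : ℝ → ℝ) x
        = ∫ y in Set.Icc (0:ℝ) 1, (φ : ℝ → ℝ) y * gpyKernel (k-1) x y := by
      rw [← hx2, hx1]
    rw [hg_eq, ← h3, ← mul_assoc, inv_mul_cancel₀ hlam, one_mul]
  -- continuity of the integrand of q on (0, ∞)
  have hFc : ∀ t : ℝ, 0 < t → ContinuousAt (fun s : ℝ => s ^ (-ν) * g s) t := by
    intro t ht
    have hgt : ContinuousAt g t := (hgc t ht.le).continuousAt (Ici_mem_nhds ht)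
    exact (continuousAt_id.rpow_const (Or.inl ht.ne')).mul hgt
  have hFi : ∀ a b : ℝ, 0 < a → a ≤ b →
      IntervalIntegrable (fun t : ℝ => t ^ (-ν) * g t) volume a b := by
    intro a b ha hab
    apply ContinuousOn.intervalIntegrable
    intro t ht
    rw [uIcc_of_le hab] at ht
    exact (hFc t (lt_of_lt_of_le ha ht.1)).continuousWithinAt
  -- derivative of q
  have hderiv : ∀ x : ℝ, 0 < x → x ≤ 1 →
      HasDerivAt (fun z => ∫ t in (1:ℝ)..z, t ^ (-ν) * g t) (x ^ (-ν) * g x) x := by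
    intro x hx0 hx1
    apply intervalIntegral.integral_hasDerivAt_right
    · exact (hFi x 1 hx0 hx1).symm
    · have hcon : ContinuousOn (fun t : ℝ => t ^ (-ν) * g t) (Ioi 0) :=
        fun t ht => (hFc t ht).continuousWithinAt
      exact ⟨Ioi 0, Ioi_mem_nhds hx0, hcon.aestronglyMeasurable measurableSet_Ioi⟩
    · exact hFc x hx0
  have hfun : (fun z => -∫ t in z..(1:ℝ), t ^ (-((k : ℝ) - 1) / 2) * g t)
      = fun z => ∫ t in (1:ℝ)..z, t ^ (-ν) * g t := by
    funext z
    rw [he, intervalIntegral.integral_symm z 1]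
  -- the key tendsto at 0 for h₂
  set h2 : ℝ → ℝ := fun x => x ^ (ν - 1) * ∫ t in (1:ℝ)..x, t ^ (-ν) * g t with hh2_def
  have h2zero : h2 0 = 0 := by
    rw [hh2_def]
    simp only
    rw [Real.zero_rpow (by linarith : ν - 1 ≠ 0), zero_mul]
  have hg0' : Tendsto g (𝓝[Ici 0] 0) (𝓝 0) := by
    have := hgc 0 le_rfl
    rwa [ContinuousWithinAt, hg0] at this
  have htend : Tendsto h2 (𝓝[Ioc 0 1] 0) (𝓝 0) := by
    rw [NormedAddCommGroup.tendsto_nhds_zero]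
    intro ε hε
    set ε' : ℝ := ε * (ν - 1) / 4 with hε'_def
    have hε'pos : 0 < ε' := by
      rw [hε'_def]
      exact div_pos (mul_pos hε (by linarith)) (by norm_num)
    obtain ⟨δ₀, hδ₀, hδ⟩ := Metric.tendsto_nhdsWithin_nhds.mp hg0' ε' hε'pos
    set δ : ℝ := min (δ₀ / 2) 1 with hδdef
    have hδpos : 0 < δ := lt_min (by linarith) one_pos
    have hδ1 : δ ≤ 1 := min_le_right _ _
    have hgsmall : ∀ t ∈ Icc (0:ℝ) δ, |g t| ≤ ε' := by
      intro t ht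
      have hd : dist t 0 < δ₀ := by
        rw [Real.dist_eq, sub_zero, abs_of_nonneg ht.1]
        calc t ≤ δ := ht.2
          _ ≤ δ₀ / 2 := min_le_left _ _
          _ < δ₀ := by linarith
      have := hδ (show t ∈ Ici (0:ℝ) from ht.1) hd
      rw [Real.dist_eq, sub_zero] at this
      exact this.le
    set C : ℝ := ∫ t in δ..(1:ℝ), t ^ (-ν) * g t with hC_def
    have hpow : Tendsto (fun x : ℝ => x ^ (ν - 1) * |C|) (𝓝 0) (𝓝 0) := by
      have h1 : ContinuousAt (fun x : ℝ => x ^ (ν - 1) * |C|) 0 :=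
        (Real.continuousAt_rpow_const 0 (ν - 1) (Or.inr (by linarith))).mul continuousAt_const
      have hval : (0:ℝ) ^ (ν - 1) * |C| = 0 := by
        rw [Real.zero_rpow (by linarith : ν - 1 ≠ 0), zero_mul]
      simpa [hval] using h1.tendsto
    have hev1 : ∀ᶠ x in 𝓝[Ioc (0:ℝ) 1] 0, x ^ (ν - 1) * |C| < ε / 2 :=
      (hpow.eventually_lt_const (by linarith : (0:ℝ) < ε / 2)).filter_mono nhdsWithin_le_nhds
    have hev2 : ∀ᶠ x in 𝓝[Ioc (0:ℝ) 1] 0, x < δ :=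
      (eventually_lt_nhds hδpos).filter_mono nhdsWithin_le_nhds
    filter_upwards [hev1, hev2, eventually_mem_nhdsWithin] with x hx1 hx2 hx
    have hx0 : 0 < x := hx.1
    have hxδ : x ≤ δ := hx2.le
    have i1 : IntervalIntegrable (fun t : ℝ => t ^ (-ν) * g t) volume x δ := hFi x δ hx0 hxδ
    have i2 : IntervalIntegrable (fun t : ℝ => t ^ (-ν) * g t) volume δ 1 := hFi δ 1 hδpos hδ1
    have hsplit : (∫ t in (1:ℝ)..x, t ^ (-ν) * g t)
        = -((∫ t in x..δ, t ^ (-ν) * g t) + C) := by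
      rw [intervalIntegral.integral_symm, intervalIntegral.integral_add_adjacent_intervals i1 i2]
    -- bound the small piece
    have ibound : IntervalIntegrable (fun t : ℝ => ε' * t ^ (-ν)) volume x δ := by
      apply ContinuousOn.intervalIntegrable
      intro t ht
      rw [uIcc_of_le hxδ] at ht
      exact (continuousAt_const.mul
        (continuousAt_id.rpow_const (Or.inl (lt_of_lt_of_le hx0 ht.1).ne'))).continuousWithinAt
    have habs : |∫ t in x..δ, t ^ (-ν) * g t| ≤ ∫ t in x..δ, ε' * t ^ (-ν) := by
      calc |∫ t in x..δ, t ^ (-ν) * g t| ≤ ∫ t in x..δ, |t ^ (-ν) * g t| :=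
            intervalIntegral.abs_integral_le_integral_abs hxδ
        _ ≤ ∫ t in x..δ, ε' * t ^ (-ν) := by
            apply intervalIntegral.integral_mono_on hxδ i1.abs ibound
            intro t ht
            have ht0 : 0 < t := lt_of_lt_of_le hx0 ht.1
            have hrn : 0 ≤ t ^ (-ν) := Real.rpow_nonneg ht0.le _
            rw [abs_mul, abs_of_nonneg hrn, mul_comm]
            exact mul_le_mul_of_nonneg_right (hgsmall t ⟨ht0.le, ht.2⟩) hrn
    have hval : (∫ t in x..δ, ε' * t ^ (-ν)) ≤ ε' * x ^ (1 - ν) / (ν - 1) := by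
      rw [intervalIntegral.integral_const_mul,
        integral_rpow (Or.inr ⟨by intro hcon; rw [neg_eq_iff_eq_neg] at hcon; linarith [hcon],
          by rw [uIcc_of_le hxδ]; exact fun hmem => absurd hmem.1 (not_le.mpr hx0)⟩)]
      have hxA : 0 ≤ x ^ (-ν + 1) := Real.rpow_nonneg hx0.le _
      have hδB : 0 ≤ δ ^ (-ν + 1) := Real.rpow_nonneg hδpos.le _
      have h1ν : (1:ℝ) - ν = -ν + 1 := by ring
      rw [h1ν]
      have heq : (δ ^ (-ν + 1) - x ^ (-ν + 1)) / (-ν + 1)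
          = (x ^ (-ν + 1) - δ ^ (-ν + 1)) / (ν - 1) := by
        rw [div_eq_div_iff (ne_of_lt (by linarith : -ν + 1 < 0))
          (ne_of_gt (by linarith : (0:ℝ) < ν - 1))]
        ring
      calc ε' * ((δ ^ (-ν + 1) - x ^ (-ν + 1)) / (-ν + 1))
          = ε' * ((x ^ (-ν + 1) - δ ^ (-ν + 1)) / (ν - 1)) := by rw [heq]
        _ ≤ ε' * (x ^ (-ν + 1) / (ν - 1)) := by
            apply mul_le_mul_of_nonneg_left _ hε'pos.le
            exact (div_le_div_iff_of_pos_right (by linarith)).mpr (by linarith)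
        _ = ε' * x ^ (-ν + 1) / (ν - 1) := by ring
    have hx1' : x ^ (ν - 1) * x ^ (1 - ν) = 1 := by
      rw [← Real.rpow_add hx0]
      norm_num
    have hxpow : 0 ≤ x ^ (ν - 1) := Real.rpow_nonneg hx0.le _
    rw [Real.norm_eq_abs, hh2_def]
    simp only
    rw [hsplit, abs_mul, abs_neg, abs_of_nonneg hxpow]
    calc x ^ (ν - 1) * |(∫ t in x..δ, t ^ (-ν) * g t) + C|
        ≤ x ^ (ν - 1) * (ε' * x ^ (1 - ν) / (ν - 1) + |C|) := by
          apply mul_le_mul_of_nonneg_left _ hxpow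
          calc |(∫ t in x..δ, t ^ (-ν) * g t) + C|
              ≤ |∫ t in x..δ, t ^ (-ν) * g t| + |C| := abs_add_le _ _
            _ ≤ ε' * x ^ (1 - ν) / (ν - 1) + |C| := by linarith [habs.trans hval]
      _ = ε' / (ν - 1) * (x ^ (ν - 1) * x ^ (1 - ν)) + x ^ (ν - 1) * |C| := by ring
      _ = ε' / (ν - 1) + x ^ (ν - 1) * |C| := by rw [hx1']; ring
      _ < ε / 4 + ε / 2 := by
          have : ε' / (ν - 1) = ε / 4 := by
            have hν1' : ν - 1 ≠ 0 := by linarith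
            rw [hε'_def]
            field_simp
          rw [this]
          linarith
      _ ≤ ε := by linarith
  -- continuity of h2
  have h2cont : ContinuousOn h2 (Set.Icc 0 1) := by
    intro x hx
    rcases eq_or_lt_of_le hx.1 with h0 | h0
    · have hx0 : x = 0 := h0.symm
      subst hx0
      rw [← Set.Ioc_insert_left (by norm_num : (0:ℝ) ≤ 1)]
      apply continuousWithinAt_insert_self.mpr
      show Tendsto h2 (𝓝[Ioc (0:ℝ) 1] 0) (𝓝 (h2 0))
      rw [h2zero]
      exact htend
    · apply ContinuousAt.continuousWithinAt
      exact (continuousAt_id.rpow_const (Or.inl h0.ne')).mul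
        (hderiv x h0 hx.2).continuousAt
  refine ⟨g, hφg, hgcOn, hg0, ⟨g, hgcOn, hg0, ?_⟩, ⟨h2, h2cont, h2zero, ?_⟩⟩
  · intro x hx
    rw [hfun, (hderiv x hx.1 hx.2).deriv, ← mul_assoc, ← Real.rpow_add hx.1]
    norm_num
  · intro x hx
    rw [hh2_def]
    simp only
    rw [he, intervalIntegral.integral_symm]
end

section
/- Let k ≥ 2 be an integer, n := k−1, K(x,y) := (min(x,y)/max(x,y))^{n/2} on [0,1]² (with K(0,0) := 0), and T the integral operator (Tf)(x) := ∫₀¹ f(y) K(x,y) dy. Then for every f ∈ L²[0,1], the function Tf is continuously differentiable on (0,1], and for all x ∈ (0,1]: (Tf)'(x) = ∫₀¹ f(y) ∂K/∂x (x,y) dy = −(n/(2x)) (Tf)(x) + n x^{n/2−1} ∫_x^1 f(y) y^{−n/2} dy. -/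
open MeasureTheory Set

/-- The `x`-partial derivative of the GPY kernel, for `x ≠ y` in `(0,1]`
(the value on the diagonal is irrelevant for the integrals below). -/
noncomputable def gpyKernelDx (n : ℕ) (x y : ℝ) : ℝ :=
  if x < y then ((n : ℝ) / 2) * x ^ ((n : ℝ) / 2 - 1) * y ^ (-(n : ℝ) / 2)
  else -((n : ℝ) / 2) * y ^ ((n : ℝ) / 2) * x ^ (-(n : ℝ) / 2 - 1)

namespace GpyAux

noncomputable def A (f : ℝ → ℝ) (c t : ℝ) : ℝ := ∫ y in Icc (0:ℝ) t, f y * y ^ c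
noncomputable def B (f : ℝ → ℝ) (c t : ℝ) : ℝ := ∫ y in Icc t (1:ℝ), f y * y ^ (-c)

variable {f : ℝ → ℝ} {c : ℝ}

lemma intOn_mul_bdd {s : Set ℝ} (hs : MeasurableSet s) (hfi : IntegrableOn f s)
    {w : ℝ → ℝ} (hw : AEStronglyMeasurable w (volume.restrict s)) {M : ℝ}
    (hM : ∀ y ∈ s, |w y| ≤ M) : IntegrableOn (fun y => f y * w y) s := by
  refine Integrable.mono' (hfi.norm.const_mul M) (hfi.aestronglyMeasurable.mul hw) ?_
  filter_upwards [ae_restrict_mem hs] with y hy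
  rw [norm_mul]
  calc ‖f y‖ * ‖w y‖ ≤ ‖f y‖ * M :=
        mul_le_mul_of_nonneg_left (by rw [Real.norm_eq_abs]; exact hM y hy) (norm_nonneg _)
    _ = M * ‖f y‖ := mul_comm _ _

lemma intApos (hfi : IntegrableOn f (Icc (0:ℝ) 1)) (hc : 0 < c) :
    IntegrableOn (fun y => f y * y ^ c) (Icc (0:ℝ) 1) := by
  refine intOn_mul_bdd measurableSet_Icc hfi
    ((Real.continuous_rpow_const hc.le).aestronglyMeasurable) (M := 1) ?_
  intro y hy
  rw [abs_of_nonneg (Real.rpow_nonneg hy.1 c)]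
  exact Real.rpow_le_one hy.1 hy.2 hc.le

lemma intBneg {a : ℝ} (ha : 0 < a) (hfi : IntegrableOn f (Icc (0:ℝ) 1)) (hc : 0 < c) :
    IntegrableOn (fun y => f y * y ^ (-c)) (Icc a 1) := by
  have hsub : Icc a 1 ⊆ Icc (0:ℝ) 1 := Icc_subset_Icc ha.le le_rfl
  refine intOn_mul_bdd measurableSet_Icc (hfi.mono_set hsub) ?_ (M := a ^ (-c)) ?_
  · refine ContinuousOn.aestronglyMeasurable ?_ measurableSet_Icc
    intro y hy
    exact (Real.continuousAt_rpow_const y (-c)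
      (Or.inl (ha.trans_le hy.1).ne')).continuousWithinAt
  · intro y hy
    beta_reduce
    have hy0 : 0 < y := ha.trans_le hy.1
    rw [abs_of_nonneg (Real.rpow_nonneg hy0.le _)]
    exact Real.rpow_le_rpow_of_nonpos ha hy.1 (neg_nonpos.2 hc.le)

lemma rep (hfi : IntegrableOn f (Icc (0:ℝ) 1)) (hc : 0 < c) {x : ℝ}
    (hx : x ∈ Ioc (0:ℝ) 1) :
    (∫ y in Icc (0:ℝ) 1, f y * (min x y / max x y) ^ c)
      = x ^ (-c) * A f c x + x ^ c * B f c x := by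
  have hx0 : 0 < x := hx.1
  have hsub1 : Icc (0:ℝ) x ⊆ Icc 0 1 := Icc_subset_Icc le_rfl hx.2
  have hEq1 : EqOn (fun y => f y * (min x y / max x y) ^ c)
      (fun y => f y * y ^ c * x ^ (-c)) (Icc 0 x) := by
    intro y hy
    simp only [min_eq_right hy.2, max_eq_left hy.2]
    rw [Real.div_rpow hy.1 hx0.le, Real.rpow_neg hx0.le, div_eq_mul_inv]
    ring
  have hEq2 : EqOn (fun y => f y * (min x y / max x y) ^ c)
      (fun y => f y * y ^ (-c) * x ^ c) (Ioc x 1) := by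
    intro y hy
    have hy0 : 0 < y := hx0.trans hy.1
    simp only [min_eq_left hy.1.le, max_eq_right hy.1.le]
    rw [Real.div_rpow hx0.le hy0.le, Real.rpow_neg hy0.le, div_eq_mul_inv]
    ring
  have hi1 : IntegrableOn (fun y => f y * (min x y / max x y) ^ c) (Icc 0 x) :=
    IntegrableOn.congr_fun (((intApos hfi hc).mono_set hsub1).mul_const _)
      hEq1.symm measurableSet_Icc
  have hi2 : IntegrableOn (fun y => f y * (min x y / max x y) ^ c) (Ioc x 1) :=
    IntegrableOn.congr_fun
      (((intBneg hx0 hfi hc).mono_set Ioc_subset_Icc_self).mul_const _)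
      hEq2.symm measurableSet_Ioc
  have hdisj : Disjoint (Icc (0:ℝ) x) (Ioc x 1) :=
    disjoint_left.mpr fun y h1 h2 => (not_lt.2 h1.2) h2.1
  rw [← Icc_union_Ioc_eq_Icc hx0.le hx.2,
    setIntegral_union hdisj measurableSet_Ioc hi1 hi2,
    setIntegral_congr_fun measurableSet_Icc hEq1,
    setIntegral_congr_fun measurableSet_Ioc hEq2,
    integral_mul_const, integral_mul_const]
  have hB : B f c x = ∫ y in Ioc x 1, f y * y ^ (-c) := by
    simp only [B]; exact integral_Icc_eq_integral_Ioc
  rw [← hB]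
  show (A f c x) * x ^ (-c) + (B f c x) * x ^ c = _
  ring

lemma repDx (hfi : IntegrableOn f (Icc (0:ℝ) 1)) (hc : 0 < c) {x : ℝ}
    (hx : x ∈ Ioc (0:ℝ) 1) :
    (∫ y in Icc (0:ℝ) 1,
        f y * (if x < y then c * x ^ (c - 1) * y ^ (-c) else -c * y ^ c * x ^ (-c - 1)))
      = -c * x ^ (-c - 1) * A f c x + c * x ^ (c - 1) * B f c x := by
  have hx0 : 0 < x := hx.1
  have hsub1 : Icc (0:ℝ) x ⊆ Icc 0 1 := Icc_subset_Icc le_rfl hx.2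
  have hEq1 : EqOn (fun y => f y *
      (if x < y then c * x ^ (c - 1) * y ^ (-c) else -c * y ^ c * x ^ (-c - 1)))
      (fun y => f y * y ^ c * (-c * x ^ (-c - 1))) (Icc 0 x) := by
    intro y hy
    simp only [if_neg (not_lt.2 hy.2)]
    ring
  have hEq2 : EqOn (fun y => f y *
      (if x < y then c * x ^ (c - 1) * y ^ (-c) else -c * y ^ c * x ^ (-c - 1)))
      (fun y => f y * y ^ (-c) * (c * x ^ (c - 1))) (Ioc x 1) := by
    intro y hy
    simp only [if_pos hy.1]
    ring
  have hi1 : IntegrableOn (fun y => f y *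
      (if x < y then c * x ^ (c - 1) * y ^ (-c) else -c * y ^ c * x ^ (-c - 1))) (Icc 0 x) :=
    IntegrableOn.congr_fun (((intApos hfi hc).mono_set hsub1).mul_const _)
      hEq1.symm measurableSet_Icc
  have hi2 : IntegrableOn (fun y => f y *
      (if x < y then c * x ^ (c - 1) * y ^ (-c) else -c * y ^ c * x ^ (-c - 1))) (Ioc x 1) :=
    IntegrableOn.congr_fun
      (((intBneg hx0 hfi hc).mono_set Ioc_subset_Icc_self).mul_const _)
      hEq2.symm measurableSet_Ioc
  have hdisj : Disjoint (Icc (0:ℝ) x) (Ioc x 1) :=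
    disjoint_left.mpr fun y h1 h2 => (not_lt.2 h1.2) h2.1
  rw [← Icc_union_Ioc_eq_Icc hx0.le hx.2,
    setIntegral_union hdisj measurableSet_Ioc hi1 hi2,
    setIntegral_congr_fun measurableSet_Icc hEq1,
    setIntegral_congr_fun measurableSet_Ioc hEq2,
    integral_mul_const, integral_mul_const]
  have hB : B f c x = ∫ y in Ioc x 1, f y * y ^ (-c) := by
    simp only [B]; exact integral_Icc_eq_integral_Ioc
  rw [← hB]
  show (A f c x) * (-c * x ^ (-c - 1)) + (B f c x) * (c * x ^ (c - 1)) = _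
  ring

lemma lip {a : ℝ} (ha : 0 < a) (hc : 0 < c) :
    ∀ t ∈ Icc a (1:ℝ), ∀ u ∈ Icc a (1:ℝ),
      |t ^ (-c) * u ^ c - t ^ c * u ^ (-c)|
        ≤ (2 * c * (a ^ (-(c+1)))^2) * |u - t| := by
  intro t ht u hu
  set M := a ^ (-(c+1)) with hMdef
  have hM0 : 0 ≤ M := Real.rpow_nonneg ha.le _
  have hM1 : ∀ s ∈ Icc a (1:ℝ), ∀ e : ℝ, -(c+1) ≤ e → s ^ e ≤ M := by
    intro s hs e he
    have hs0 : 0 < s := ha.trans_le hs.1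
    calc s ^ e ≤ s ^ (-(c+1)) := Real.rpow_le_rpow_of_exponent_ge hs0 hs.2 he
      _ ≤ a ^ (-(c+1)) := Real.rpow_le_rpow_of_nonpos ha hs.1 (by linarith)
  have key := Convex.norm_image_sub_le_of_norm_hasDerivWithin_le
    (f := fun u => t ^ (-c) * u ^ c - t ^ c * u ^ (-c))
    (f' := fun u => t ^ (-c) * (c * u ^ (c - 1)) - t ^ c * (-c * u ^ (-c - 1)))
    (s := Icc a 1) (C := 2 * c * M ^ 2) ?_ ?_ (convex_Icc a 1) ht hu
  · have key' : |(t ^ (-c) * u ^ c - t ^ c * u ^ (-c))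
        - (t ^ (-c) * t ^ c - t ^ c * t ^ (-c))| ≤ 2 * c * M ^ 2 * |u - t| := by
      simpa [Real.norm_eq_abs] using key
    have h0 : t ^ (-c) * t ^ c - t ^ c * t ^ (-c) = 0 := by ring
    rw [h0, sub_zero] at key'
    exact key'
  · intro y hy
    have hy0 : y ≠ 0 := (ha.trans_le hy.1).ne'
    exact (((Real.hasDerivAt_rpow_const (p := c) (Or.inl hy0)).const_mul
      (t ^ (-c))).sub ((Real.hasDerivAt_rpow_const (p := -c) (Or.inl hy0)).const_mul
        (t ^ c))).hasDerivWithinAt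
  · intro y hy
    beta_reduce
    have hy0 : 0 < y := ha.trans_le hy.1
    have ht0 : 0 < t := ha.trans_le ht.1
    have h1 : t ^ (-c) ≤ M := hM1 t ht _ (by linarith)
    have h2 : y ^ (c - 1) ≤ M := hM1 y hy _ (by linarith)
    have h3 : t ^ c ≤ M := hM1 t ht _ (by linarith)
    have h4 : y ^ (-c - 1) ≤ M := hM1 y hy _ (by linarith)
    have n1 : 0 ≤ t ^ (-c) := Real.rpow_nonneg ht0.le _
    have n2 : 0 ≤ y ^ (c - 1) := Real.rpow_nonneg hy0.le _
    have n3 : 0 ≤ t ^ c := Real.rpow_nonneg ht0.le _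
    have n4 : 0 ≤ y ^ (-c - 1) := Real.rpow_nonneg hy0.le _
    have e : t ^ (-c) * (c * y ^ (c - 1)) - t ^ c * (-c * y ^ (-c - 1))
        = c * (t ^ (-c) * y ^ (c - 1)) + c * (t ^ c * y ^ (-c - 1)) := by ring
    rw [Real.norm_eq_abs, e, abs_of_nonneg (by positivity)]
    have b1 : t ^ (-c) * y ^ (c - 1) ≤ M * M := mul_le_mul h1 h2 n2 hM0
    have b2 : t ^ c * y ^ (-c - 1) ≤ M * M := mul_le_mul h3 h4 n4 hM0
    nlinarith [hc.le]

lemma key (hfi : IntegrableOn f (Icc (0:ℝ) 1)) (hc : 0 < c) {x : ℝ}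
    (hx : x ∈ Ioc (0:ℝ) 1) :
    HasDerivWithinAt (fun t => t ^ (-c) * A f c t + t ^ c * B f c t)
      (-c * x ^ (-c - 1) * A f c x + c * x ^ (c - 1) * B f c x) (Ioc 0 1) x := by
  have hx0 : 0 < x := hx.1
  set a := x / 2 with ha_def
  have ha : 0 < a := half_pos hx0
  have haX : a < x := half_lt_self hx0
  have ha1 : a ≤ 1 := haX.le.trans hx.2
  have hxI : x ∈ Icc a 1 := ⟨haX.le, hx.2⟩
  have hx01 : x ∈ Icc (0:ℝ) 1 := ⟨hx0.le, hx.2⟩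
  have hIc : IntegrableOn (fun y => f y * y ^ c) (Icc (0:ℝ) 1) := intApos hfi hc
  have hInc : IntegrableOn (fun y => f y * y ^ (-c)) (Icc a 1) := intBneg ha hfi hc
  have iiA : ∀ u v : ℝ, u ∈ Icc (0:ℝ) 1 → v ∈ Icc (0:ℝ) 1 →
      IntervalIntegrable (fun y => f y * y ^ c) volume u v := fun u v hu hv =>
    (hIc.mono_set (uIcc_subset_Icc hu hv)).intervalIntegrable
  have iiB : ∀ u v : ℝ, u ∈ Icc a 1 → v ∈ Icc a 1 →
      IntervalIntegrable (fun y => f y * y ^ (-c)) volume u v := fun u v hu hv =>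
    (hInc.mono_set (uIcc_subset_Icc hu hv)).intervalIntegrable
  have iiF : ∀ u v : ℝ, u ∈ Icc (0:ℝ) 1 → v ∈ Icc (0:ℝ) 1 →
      IntervalIntegrable (fun y => |f y|) volume u v := fun u v hu hv =>
    (IntegrableOn.mono_set hfi.norm (uIcc_subset_Icc hu hv)).intervalIntegrable
  -- the smooth part
  have hsm : HasDerivWithinAt (fun t => t ^ (-c) * A f c x + t ^ c * B f c x)
      (-c * x ^ (-c - 1) * A f c x + c * x ^ (c - 1) * B f c x) (Ioc 0 1) x := by
    have h1 := (Real.hasDerivAt_rpow_const (x := x) (p := -c)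
      (Or.inl hx0.ne')).mul_const (A f c x)
    have h2 := (Real.hasDerivAt_rpow_const (x := x) (p := c)
      (Or.inl hx0.ne')).mul_const (B f c x)
    have h3 := (h1.add h2).hasDerivWithinAt (s := Ioc (0:ℝ) 1)
    exact h3
  -- the error part
  set M := a ^ (-(c+1)) with hMdef
  have hM0 : 0 ≤ M := Real.rpow_nonneg ha.le _
  set C := 2 * c * M ^ 2 with hCdef
  have hC0 : 0 ≤ C := by positivity
  have hEzero : HasDerivWithinAt
      (fun t => t ^ (-c) * (A f c t - A f c x) + t ^ c * (B f c t - B f c x))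
      0 (Ioc 0 1) x := by
    rw [hasDerivWithinAt_iff_tendsto_slope]
    apply squeeze_zero_norm' (a := fun t => C * abs (∫ u in x..t, |f u|))
    · filter_upwards [self_mem_nhdsWithin,
        nhdsWithin_le_nhds (Ioi_mem_nhds haX)] with t htm hta
      obtain ⟨ht, htx⟩ := htm
      have htI : t ∈ Icc a 1 := ⟨le_of_lt hta, ht.2⟩
      have ht01 : t ∈ Icc (0:ℝ) 1 := ⟨ht.1.le, ht.2⟩
      have htne : t ≠ x := htx
      -- integral formulas
      have hA : A f c t - A f c x = ∫ u in x..t, f u * u ^ c := by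
        have e1 : A f c t = ∫ u in (0:ℝ)..t, f u * u ^ c := by
          simp only [A]
          rw [integral_Icc_eq_integral_Ioc, intervalIntegral.integral_of_le ht.1.le]
        have e2 : A f c x = ∫ u in (0:ℝ)..x, f u * u ^ c := by
          simp only [A]
          rw [integral_Icc_eq_integral_Ioc, intervalIntegral.integral_of_le hx0.le]
        rw [e1, e2]
        exact intervalIntegral.integral_interval_sub_left
          (iiA 0 t (left_mem_Icc.2 zero_le_one) ht01)
          (iiA 0 x (left_mem_Icc.2 zero_le_one) hx01)
      have hB : B f c t - B f c x = -∫ u in x..t, f u * u ^ (-c) := by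
        have e1 : B f c t = ∫ u in t..(1:ℝ), f u * u ^ (-c) := by
          simp only [B]
          rw [integral_Icc_eq_integral_Ioc, intervalIntegral.integral_of_le ht.2]
        have e2 : B f c x = ∫ u in x..(1:ℝ), f u * u ^ (-c) := by
          simp only [B]
          rw [integral_Icc_eq_integral_Ioc, intervalIntegral.integral_of_le hx.2]
        have hadd := intervalIntegral.integral_add_adjacent_intervals
          (iiB x t hxI htI) (iiB t 1 htI (right_mem_Icc.2 ha1))
        rw [e1, e2]
        linarith [hadd]
      have hEt : t ^ (-c) * (A f c t - A f c x) + t ^ c * (B f c t - B f c x)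
          = ∫ u in x..t, f u * (t ^ (-c) * u ^ c - t ^ c * u ^ (-c)) := by
        rw [hA, hB, mul_neg, ← sub_eq_add_neg,
          ← intervalIntegral.integral_const_mul, ← intervalIntegral.integral_const_mul,
          ← intervalIntegral.integral_sub ((iiA x t hx01 ht01).const_mul _)
            ((iiB x t hxI htI).const_mul _)]
        exact intervalIntegral.integral_congr fun u _ => by ring
      have hEx : x ^ (-c) * (A f c x - A f c x) + x ^ c * (B f c x - B f c x) = 0 := by
        ring
      rw [slope_def_field, hEx, sub_zero, hEt, Real.norm_eq_abs, abs_div,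
        div_le_iff₀ (abs_pos.2 (sub_ne_zero.2 htne))]
      have hbound : ∀ u ∈ Set.uIoc x t,
          ‖f u * (t ^ (-c) * u ^ c - t ^ c * u ^ (-c))‖ ≤ (C * |t - x|) * |f u| := by
        intro u hu
        have habs1 := le_abs_self (t - x)
        have habs2 := neg_abs_le (t - x)
        have huI : u ∈ Icc a 1 ∧ |u - t| ≤ |t - x| := by
          rcases Set.mem_uIoc.mp hu with ⟨h1, h2⟩ | ⟨h1, h2⟩
          · refine ⟨⟨haX.le.trans h1.le, h2.trans ht.2⟩, abs_le.2 ⟨by linarith, by linarith⟩⟩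
          · refine ⟨⟨hta.le.trans h1.le, h2.trans hx.2⟩, abs_le.2 ⟨by linarith, by linarith⟩⟩
        have hlip := lip ha hc t htI u huI.1
        rw [Real.norm_eq_abs, abs_mul]
        calc |f u| * |t ^ (-c) * u ^ c - t ^ c * u ^ (-c)|
            ≤ |f u| * (C * |u - t|) := mul_le_mul_of_nonneg_left hlip (abs_nonneg _)
          _ ≤ |f u| * (C * |t - x|) :=
              mul_le_mul_of_nonneg_left (mul_le_mul_of_nonneg_left huI.2 hC0) (abs_nonneg _)
          _ = (C * |t - x|) * |f u| := mul_comm _ _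
      have hgi : IntervalIntegrable (fun u => (C * |t - x|) * |f u|) volume x t :=
        (iiF x t hx01 ht01).const_mul _
      calc |∫ u in x..t, f u * (t ^ (-c) * u ^ c - t ^ c * u ^ (-c))|
          ≤ abs (∫ u in x..t, (C * |t - x|) * |f u|) := by
            have hae : ∀ᵐ u ∂volume.restrict (Set.uIoc x t),
                ‖f u * (t ^ (-c) * u ^ c - t ^ c * u ^ (-c))‖ ≤ (C * |t - x|) * |f u| := by
              filter_upwards [ae_restrict_mem measurableSet_uIoc] with u hu
              exact hbound u hu
            have h5 := intervalIntegral.norm_integral_le_abs_of_norm_le hae hgi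
            rwa [Real.norm_eq_abs] at h5
        _ = C * abs (∫ u in x..t, |f u|) * |t - x| := by
            rw [intervalIntegral.integral_const_mul, abs_mul,
              abs_of_nonneg (by positivity : (0:ℝ) ≤ C * |t - x|)]
            ring
    · -- tendsto of the bound
      have hii : IntervalIntegrable (fun u => |f u|) volume a 1 :=
        iiF a 1 ⟨ha.le, ha1⟩ (right_mem_Icc.2 zero_le_one)
      have hxmem : x ∈ uIcc a 1 := by rw [uIcc_of_le ha1]; exact hxI
      have hcont := intervalIntegral.continuousOn_primitive_interval' hii hxmem
      have htd : Filter.Tendsto (fun t => ∫ u in x..t, |f u|)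
          (nhdsWithin x (Ioc 0 1 \ {x})) (nhds 0) := by
        have h1 : Filter.Tendsto (fun t => ∫ u in x..t, |f u|)
            (nhdsWithin x (uIcc a 1)) (nhds 0) := by
          have := hcont x hxmem
          simpa [ContinuousWithinAt, intervalIntegral.integral_same] using this
        refine h1.mono_left ?_
        calc nhdsWithin x (Ioc 0 1 \ {x})
            = nhdsWithin x ((Ioc 0 1 \ {x}) ∩ Ioi a) :=
              nhdsWithin_restrict' _ (Ioi_mem_nhds haX)
          _ ≤ nhdsWithin x (uIcc a 1) := by
              refine nhdsWithin_mono _ ?_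
              rw [uIcc_of_le ha1]
              rintro y ⟨⟨hy1, _⟩, hy2⟩
              exact ⟨le_of_lt hy2, hy1.2⟩
      have h6 := (tendsto_const_nhds (x := C)
        (f := nhdsWithin x (Ioc 0 1 \ {x}))).mul htd.abs
      simpa using h6
  have hsum := hsm.add hEzero
  rw [add_zero] at hsum
  refine hsum.congr (fun t _ => by simp only [Pi.add_apply]; ring) (by simp only [Pi.add_apply]; ring)

lemma Bcont (hfi : IntegrableOn f (Icc (0:ℝ) 1)) (hc : 0 < c) :
    ContinuousOn (B f c) (Ioc (0:ℝ) 1) := by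
  intro x hx
  have hx0 : 0 < x := hx.1
  set a := x / 2 with ha_def
  have ha : 0 < a := half_pos hx0
  have haX : a < x := half_lt_self hx0
  have ha1 : a ≤ 1 := haX.le.trans hx.2
  have hInt : IntegrableOn (fun y => f y * y ^ (-c)) (Icc a 1) := intBneg ha hfi hc
  have hii : IntegrableOn (fun y => f y * y ^ (-c)) (uIcc a 1) := by
    rwa [uIcc_of_le ha1]
  have hcont := intervalIntegral.continuousOn_primitive_interval_left hii
  have heq : EqOn (B f c) (fun t => ∫ u in t..(1:ℝ), f u * u ^ (-c)) (uIcc a 1) := by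
    intro t ht
    rw [uIcc_of_le ha1] at ht
    simp only [B]
    rw [integral_Icc_eq_integral_Ioc, intervalIntegral.integral_of_le ht.2]
  have hcB : ContinuousOn (B f c) (uIcc a 1) := hcont.congr heq
  have hx' : x ∈ uIcc a 1 := by rw [uIcc_of_le ha1]; exact ⟨haX.le, hx.2⟩
  refine (hcB x hx').mono_of_mem_nhdsWithin ?_
  rw [uIcc_of_le ha1]
  exact mem_nhdsWithin.mpr ⟨Ioi a, isOpen_Ioi, haX,
    fun y hy => ⟨le_of_lt hy.1, hy.2.2⟩⟩

end GpyAux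

/-- For `k ≥ 2`, `n := k-1` and `f ∈ L²[0,1]`, the function
`Tf(x) = ∫₀¹ f(y) K(x,y) dy` is continuously differentiable on `(0,1]`, with
`(Tf)'(x) = ∫₀¹ f(y) ∂K/∂x(x,y) dy = -(n/(2x)) (Tf)(x) + n x^(n/2-1) ∫_x^1 f(y) y^(-n/2) dy`. -/
theorem gpy_Tf_differentiable (k : ℕ) (hk : 2 ≤ k) (f : ℝ → ℝ)
    (hf : MemLp f 2 (volume.restrict (Set.Icc (0:ℝ) 1)))
    (g D : ℝ → ℝ)
    (hg : g = fun x => ∫ y in Set.Icc (0:ℝ) 1, f y * gpyKernel (k - 1) x y)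
    (hD : D = fun x => -(((k : ℝ) - 1) / (2 * x)) * g x +
      ((k : ℝ) - 1) * x ^ (((k : ℝ) - 1) / 2 - 1) *
        ∫ y in Set.Icc x 1, f y * y ^ (-((k : ℝ) - 1) / 2)) :
    (∀ x ∈ Set.Ioc (0:ℝ) 1, HasDerivWithinAt g (D x) (Set.Ioc 0 1) x) ∧
    (∀ x ∈ Set.Ioc (0:ℝ) 1,
      D x = ∫ y in Set.Icc (0:ℝ) 1, f y * gpyKernelDx (k - 1) x y) ∧
    ContinuousOn D (Set.Ioc 0 1) := by
  have h1k : 1 ≤ k := le_trans one_le_two hk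
  have hcast : ((k - 1 : ℕ) : ℝ) = (k : ℝ) - 1 := by
    rw [Nat.cast_sub h1k]; norm_num
  set c : ℝ := ((k : ℝ) - 1) / 2 with hcdef
  have h2k : (2:ℝ) ≤ (k:ℝ) := by exact_mod_cast hk
  have hc : 0 < c := by rw [hcdef]; linarith
  haveI : IsFiniteMeasure (volume.restrict (Set.Icc (0:ℝ) 1)) := by
    constructor
    rw [Measure.restrict_apply_univ]
    simp [Real.volume_Icc]
  have hfi : IntegrableOn f (Set.Icc (0:ℝ) 1) volume := hf.integrable one_le_two
  -- g agrees with the A/B representation on (0,1]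
  have hgG : ∀ x ∈ Set.Ioc (0:ℝ) 1,
      g x = x ^ (-c) * GpyAux.A f c x + x ^ c * GpyAux.B f c x := by
    intro x hx
    rw [hg]
    simp only [gpyKernel, hcast, ← hcdef]
    exact GpyAux.rep hfi hc hx
  -- D agrees with the derivative expression
  have hDeq : ∀ x ∈ Set.Ioc (0:ℝ) 1,
      D x = -c * x ^ (-c - 1) * GpyAux.A f c x + c * x ^ (c - 1) * GpyAux.B f c x := by
    intro x hx
    have hx0 : 0 < x := hx.1
    rw [hD]
    simp only [neg_div, ← hcdef]
    rw [hgG x hx]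
    have hBmatch : (∫ y in Set.Icc x 1, f y * y ^ (-c)) = GpyAux.B f c x := rfl
    rw [hBmatch]
    have e1 : x ^ (-c - 1) = x ^ (-c) * x⁻¹ := by
      rw [show -c - 1 = -c + (-1) by ring, Real.rpow_add hx0, Real.rpow_neg_one]
    have e2 : x ^ (c - 1) = x ^ c * x⁻¹ := by
      rw [show c - 1 = c + (-1) by ring, Real.rpow_add hx0, Real.rpow_neg_one]
    have hr : (k : ℝ) - 1 = 2 * c := by rw [hcdef]; ring
    rw [e1, e2, hr]
    field_simp
    ring
  refine ⟨?_, ?_, ?_⟩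
  · intro x hx
    have hkey := GpyAux.key hfi hc hx
    rw [hDeq x hx]
    exact hkey.congr (fun t ht => hgG t ht) (hgG x hx)
  · intro x hx
    rw [hDeq x hx]
    have hker : ∀ y : ℝ, f y * gpyKernelDx (k - 1) x y
        = f y * (if x < y then c * x ^ (c - 1) * y ^ (-c)
            else -c * y ^ c * x ^ (-c - 1)) := by
      intro y
      simp only [gpyKernelDx, hcast, neg_div, ← hcdef]
    simp only [hker]
    exact (GpyAux.repDx hfi hc hx).symm
  · have hDon : ContinuousOn
        (fun x => -c * x ^ (-c - 1) * GpyAux.A f c x + c * x ^ (c - 1) * GpyAux.B f c x)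
        (Set.Ioc (0:ℝ) 1) := by
      have hA : ContinuousOn (GpyAux.A f c) (Set.Ioc (0:ℝ) 1) := by
        have := intervalIntegral.continuousOn_primitive_Icc
          (f := fun y => f y * y ^ c) (a := (0:ℝ)) (b := 1) (μ := volume)
          (GpyAux.intApos hfi hc)
        exact this.mono Set.Ioc_subset_Icc_self
      have hB : ContinuousOn (GpyAux.B f c) (Set.Ioc (0:ℝ) 1) := GpyAux.Bcont hfi hc
      have hp1 : ContinuousOn (fun x : ℝ => x ^ (-c - 1)) (Set.Ioc (0:ℝ) 1) :=
        fun x hx => (Real.continuousAt_rpow_const x _ (Or.inl hx.1.ne')).continuousWithinAt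
      have hp2 : ContinuousOn (fun x : ℝ => x ^ (c - 1)) (Set.Ioc (0:ℝ) 1) :=
        fun x hx => (Real.continuousAt_rpow_const x _ (Or.inl hx.1.ne')).continuousWithinAt
      exact ((continuousOn_const.mul hp1).mul hA).add ((continuousOn_const.mul hp2).mul hB)
    exact hDon.congr hDeq
end

section
/- Let k ≥ 2 be an integer, n := k−1, K(x,y) := (min(x,y)/max(x,y))^{n/2} on [0,1]² (with K(0,0) := 0), and T the integral operator (Tf)(x) := ∫₀¹ f(y) K(x,y) dy on L²[0,1]. Let λ > 0 and suppose q : (0,1] → ℝ is a twice continuously differentiable, not identically zero solution of q''(x) + (n/x) q'(x) + ((n/λ)/x) q(x) = 0 on (0,1] with q(1) = 0. If the function φ(x) := x^{n/2} q'(x) extends continuously to [0,1] with lim_{x→0+} x^{n/2} q'(x) = 0, then φ ∈ L²[0,1] is an eigenfunction of T with eigenvalue λ, i.e. Tφ = λφ. -/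
open MeasureTheory Set Filter Topology

/-- FTC for improper integral on `(0, x]` with primitive tending to 0 at `0⁺`. -/
lemma aux_integral_Ioc_improper (g G : ℝ → ℝ) {x M : ℝ} (hx : 0 < x)
    (hderiv : ∀ t ∈ Ioc (0:ℝ) x, HasDerivWithinAt G (g t) (Ioc 0 x) t)
    (hgcont : ContinuousOn g (Ioc 0 x))
    (hbd : ∀ t ∈ Ioc (0:ℝ) x, ‖g t‖ ≤ M)
    (hG0 : Tendsto G (𝓝[>] (0:ℝ)) (𝓝 0)) :
    ∫ y in Ioc (0:ℝ) x, g y = G x := by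
  have hgm : AEStronglyMeasurable g (volume.restrict (Ioc 0 x)) :=
    hgcont.aestronglyMeasurable measurableSet_Ioc
  have hgint : IntegrableOn g (Ioc 0 x) volume :=
    ⟨hgm, HasFiniteIntegral.restrict_of_bounded (C := M) (by simp [Real.volume_Ioc])
      ((ae_restrict_iff' measurableSet_Ioc).2 (ae_of_all _ hbd))⟩
  have hGcont : ContinuousOn G (Ioc 0 x) := fun t ht => (hderiv t ht).continuousWithinAt
  -- closed-interval FTC for ε ∈ Ioo 0 x
  have hFTC : ∀ ε ∈ Ioo (0:ℝ) x, ∫ y in Ioc ε x, g y = G x - G ε := by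
    intro ε hε
    rw [← intervalIntegral.integral_of_le hε.2.le]
    apply intervalIntegral.integral_eq_sub_of_hasDeriv_right_of_le hε.2.le
    · exact hGcont.mono (fun t ht => ⟨lt_of_lt_of_le hε.1 ht.1, ht.2⟩)
    · intro t ht
      have htm : t ∈ Ioc (0:ℝ) x := ⟨lt_trans hε.1 ht.1, ht.2.le⟩
      have : Ioc (0:ℝ) x ∈ 𝓝 t :=
        mem_of_superset (isOpen_Ioo.mem_nhds ⟨htm.1, ht.2⟩) Ioo_subset_Ioc_self
      exact ((hderiv t htm).hasDerivAt this).hasDerivWithinAt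
    · exact (hgcont.mono (fun t ht => ⟨lt_of_lt_of_le hε.1 ht.1, ht.2⟩)).intervalIntegrable_of_Icc hε.2.le
  have hsplit : ∀ ε ∈ Ioo (0:ℝ) x,
      (∫ y in Ioc (0:ℝ) x, g y) = (∫ y in Ioc (0:ℝ) ε, g y) + ∫ y in Ioc ε x, g y := by
    intro ε hε
    rw [← setIntegral_union (Set.Ioc_disjoint_Ioc_of_le le_rfl) measurableSet_Ioc
        (hgint.mono_set (Ioc_subset_Ioc_right hε.2.le))
        (hgint.mono_set (Ioc_subset_Ioc_left hε.1.le)),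
      Ioc_union_Ioc_eq_Ioc hε.1.le hε.2.le]
  have hsmall : Tendsto (fun ε => ∫ y in Ioc (0:ℝ) ε, g y) (𝓝[>] (0:ℝ)) (𝓝 0) := by
    have hM0 : 0 ≤ M := le_trans (norm_nonneg _) (hbd x ⟨hx, le_refl x⟩)
    apply squeeze_zero_norm'
    · filter_upwards [Ioo_mem_nhdsGT_of_mem ⟨le_refl (0:ℝ), hx⟩] with ε hε
      calc ‖∫ y in Ioc (0:ℝ) ε, g y‖
          ≤ M * (volume (Ioc (0:ℝ) ε)).toReal := by
            exact norm_setIntegral_le_of_norm_le_const (by simp [Real.volume_Ioc])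
              (fun t ht => hbd t ⟨ht.1, le_trans ht.2 hε.2.le⟩)
        _ = M * ε := by simp [Real.volume_Ioc, ENNReal.toReal_ofReal hε.1.le]
    · have : Tendsto (fun ε : ℝ => M * ε) (𝓝[>] (0:ℝ)) (𝓝 (M * 0)) :=
        (tendsto_const_nhds.mul Filter.tendsto_id).mono_left nhdsWithin_le_nhds
      simpa using this
  -- two limits of G ε
  have h1 : Tendsto (fun ε => (∫ y in Ioc (0:ℝ) x, g y) - ∫ y in Ioc (0:ℝ) ε, g y)
      (𝓝[>] (0:ℝ)) (𝓝 ((∫ y in Ioc (0:ℝ) x, g y) - 0)) := tendsto_const_nhds.sub hsmall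
  have h2 : Tendsto (fun ε => (∫ y in Ioc (0:ℝ) x, g y) - ∫ y in Ioc (0:ℝ) ε, g y)
      (𝓝[>] (0:ℝ)) (𝓝 (G x - 0)) := by
    apply Tendsto.congr' _ (tendsto_const_nhds.sub hG0)
    filter_upwards [Ioo_mem_nhdsGT_of_mem ⟨le_refl (0:ℝ), hx⟩] with ε hε
    rw [hsplit ε hε, hFTC ε hε]; ring
  have := tendsto_nhds_unique h1 h2
  linarith

/-- **converse direction.** Let `k ≥ 2`, `n := k-1`, `λ > 0`, and let `q`
be a twice continuously differentiable, not identically zero solution on `(0,1]` of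
`q'' + (n/x) q' + ((n/λ)/x) q = 0` with `q(1) = 0`.  If `φ(x) := x^(n/2) q'(x)` extends
continuously to `[0,1]` with `x^(n/2) q'(x) → 0` as `x → 0⁺`, then `φ ∈ L²[0,1]` and `φ`
is an eigenfunction of the GPY integral operator with eigenvalue `λ`:
`∫₀¹ φ(y) K(x,y) dy = λ φ(x)` a.e. on `[0,1]`. -/
theorem gpy_ODE_solution_is_eigenfunction (k : ℕ) (hk : 2 ≤ k)
    (lam : ℝ) (hlam : 0 < lam) (q q' q'' : ℝ → ℝ)
    (hq' : ∀ x ∈ Set.Ioc (0:ℝ) 1, HasDerivWithinAt q (q' x) (Set.Ioc 0 1) x)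
    (hq'' : ∀ x ∈ Set.Ioc (0:ℝ) 1, HasDerivWithinAt q' (q'' x) (Set.Ioc 0 1) x)
    (hq'cont : ContinuousOn q' (Set.Ioc 0 1))
    (hq''cont : ContinuousOn q'' (Set.Ioc 0 1))
    (hq1 : q 1 = 0)
    (hqne : ∃ x ∈ Set.Ioc (0:ℝ) 1, q x ≠ 0)
    (hODE : ∀ x ∈ Set.Ioc (0:ℝ) 1,
      q'' x + (((k : ℝ) - 1) / x) * q' x + ((((k : ℝ) - 1) / lam) / x) * q x = 0)
    (φ : ℝ → ℝ) (hφ : ∀ x ∈ Set.Ioc (0:ℝ) 1, φ x = x ^ (((k : ℝ) - 1) / 2) * q' x)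
    (hφ0 : φ 0 = 0)
    (hlim : Tendsto (fun x => x ^ (((k : ℝ) - 1) / 2) * q' x) (𝓝[>] (0:ℝ)) (𝓝 0)) :
    MemLp φ 2 mu01 ∧
    ∀ᵐ x ∂mu01,
      (∫ y in Set.Icc (0:ℝ) 1, φ y * gpyKernel (k - 1) x y) = lam * φ x := by
  have hk1 : (1:ℝ) ≤ (k:ℝ) - 1 := by
    have : (2:ℝ) ≤ (k:ℝ) := by exact_mod_cast hk
    linarith
  set n : ℝ := (k:ℝ) - 1 with hn
  set c : ℝ := n / 2 with hc
  have hn0 : 0 < n := lt_of_lt_of_le one_pos hk1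
  have hc0 : 0 < c := by rw [hc]; positivity
  have hcc : c + c = n := by rw [hc]; ring
  have hncc : n - c = c := by rw [hc]; ring
  have hker : ∀ x y : ℝ, gpyKernel (k - 1) x y = (min x y / max x y) ^ c := by
    intro x y
    rw [gpyKernel, hc, hn]
    congr 2
    push_cast [Nat.cast_sub (le_trans one_le_two hk)]
    ring
  -- continuity of q
  have hqcont : ContinuousOn q (Ioc 0 1) := fun t ht => (hq' t ht).continuousWithinAt
  -- φ agrees with a continuous function on Ioc 0 1
  have hrpowc : ContinuousOn (fun y : ℝ => y ^ c) (Ioc (0:ℝ) 1) :=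
    ContinuousOn.rpow_const continuousOn_id (fun y hy => Or.inl (ne_of_gt hy.1))
  have hφIoc : ContinuousOn φ (Ioc 0 1) := (hrpowc.mul hq'cont).congr hφ
  -- φ continuous on Icc 0 1
  have hφcont : ContinuousOn φ (Icc 0 1) := by
    intro x hx
    rcases eq_or_lt_of_le hx.1 with h0 | h0
    · subst h0
      have h1 : Tendsto φ (𝓝[Ioc (0:ℝ) 1] 0) (𝓝 0) := by
        apply Tendsto.congr' _ (hlim.mono_left (nhdsWithin_mono _ Ioc_subset_Ioi_self))
        filter_upwards [self_mem_nhdsWithin] with y hy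
        exact (hφ y hy).symm
      have : Tendsto φ (𝓝[Icc (0:ℝ) 1] 0) (𝓝 0) := by
        rw [← Set.Ioc_insert_left zero_le_one, nhdsWithin_insert]
        refine Tendsto.sup ?_ h1
        simpa [hφ0] using tendsto_pure_nhds φ 0
      simpa [ContinuousWithinAt, hφ0] using this
    · have hmem : Ioc (0:ℝ) 1 ∈ 𝓝[Icc (0:ℝ) 1] x := by
        rw [mem_nhdsWithin]
        exact ⟨Ioi 0, isOpen_Ioi, h0, fun y hy => ⟨hy.1, hy.2.2⟩⟩
      exact (hφIoc x ⟨h0, hx.2⟩).mono_of_mem_nhdsWithin hmem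
  obtain ⟨M, hM⟩ := isCompact_Icc.exists_bound_of_continuousOn hφcont
  have hM0 : 0 ≤ M := le_trans (norm_nonneg _) (hM 0 ⟨le_refl 0, zero_le_one⟩)
  -- Memℒp
  haveI : IsFiniteMeasure mu01 := by
    constructor
    rw [mu01, Measure.restrict_apply_univ]
    simp [Real.volume_Icc]
  have hφmeas : AEStronglyMeasurable φ mu01 := hφcont.aestronglyMeasurable measurableSet_Icc
  have hmem : MemLp φ 2 mu01 := by
    refine MemLp.of_bound hφmeas M ?_
    rw [mu01]
    exact (ae_restrict_iff' measurableSet_Icc).2 (ae_of_all _ hM)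
  refine ⟨hmem, ?_⟩
  -- bound for g y = y^n * q' y on Ioc 0 1
  have hφbd : ∀ t ∈ Ioc (0:ℝ) 1, ‖t ^ c * q' t‖ ≤ M := by
    intro t ht
    rw [← hφ t ht]
    exact hM t (Ioc_subset_Icc_self ht)
  have hgbd : ∀ t ∈ Ioc (0:ℝ) 1, ‖t ^ n * q' t‖ ≤ M := by
    intro t ht
    have h1 : t ^ n * q' t = t ^ c * (t ^ c * q' t) := by
      rw [← mul_assoc, ← Real.rpow_add ht.1, hcc]
    rw [h1, norm_mul]
    calc ‖t ^ c‖ * ‖t ^ c * q' t‖ ≤ 1 * M := by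
          apply mul_le_mul _ (hφbd t ht) (norm_nonneg _) zero_le_one
          rw [Real.norm_of_nonneg (Real.rpow_nonneg ht.1.le c)]
          exact Real.rpow_le_one ht.1.le ht.2 hc0.le
      _ = M := one_mul M
  have hgcont : ContinuousOn (fun y : ℝ => y ^ n * q' y) (Ioc (0:ℝ) 1) :=
    (ContinuousOn.rpow_const continuousOn_id (fun y hy => Or.inl (ne_of_gt hy.1))).mul hq'cont
  -- tendsto ε^c → 0
  have hεc : Tendsto (fun ε : ℝ => ε ^ c) (𝓝[>] (0:ℝ)) (𝓝 0) := by
    have h2 : Tendsto (fun ε : ℝ => ε ^ c) (𝓝[>] (0:ℝ)) (𝓝 ((0:ℝ) ^ c)) :=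
      (Real.continuousAt_rpow_const 0 c (Or.inr hc0.le)).tendsto.mono_left nhdsWithin_le_nhds
    rwa [Real.zero_rpow hc0.ne'] at h2
  have hεn : Tendsto (fun ε : ℝ => ε ^ n) (𝓝[>] (0:ℝ)) (𝓝 0) := by
    have h2 : Tendsto (fun ε : ℝ => ε ^ n) (𝓝[>] (0:ℝ)) (𝓝 ((0:ℝ) ^ n)) :=
      (Real.continuousAt_rpow_const 0 n (Or.inr hn0.le)).tendsto.mono_left nhdsWithin_le_nhds
    rwa [Real.zero_rpow hn0.ne'] at h2
  -- FTC on closed subintervals of (0,1]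
  have hFTCq : ∀ a b : ℝ, 0 < a → a ≤ b → b ≤ 1 → ∫ t in a..b, q' t = q b - q a := by
    intro a b ha hab hb1
    have hsub : Icc a b ⊆ Ioc (0:ℝ) 1 := fun t ht => ⟨lt_of_lt_of_le ha ht.1, le_trans ht.2 hb1⟩
    apply intervalIntegral.integral_eq_sub_of_hasDeriv_right_of_le hab
      (hqcont.mono hsub)
    · intro t ht
      have htm : t ∈ Ioc (0:ℝ) 1 := hsub ⟨ht.1.le, ht.2.le⟩
      have : Ioc (0:ℝ) 1 ∈ 𝓝 t :=
        mem_of_superset (isOpen_Ioo.mem_nhds ⟨htm.1, lt_of_lt_of_le ht.2 hb1⟩) Ioo_subset_Ioc_self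
      exact ((hq' t htm).hasDerivAt this).hasDerivWithinAt
    · exact (hq'cont.mono hsub).intervalIntegrable_of_Icc hab
  -- ε^n * q ε → 0
  have hq0 : Tendsto (fun ε : ℝ => ε ^ n * q ε) (𝓝[>] (0:ℝ)) (𝓝 0) := by
    have h1 : ∀ᶠ y in 𝓝[>] (0:ℝ), ‖y ^ c * q' y‖ < 1 := by
      have := hlim.norm
      simp only [norm_zero] at this
      exact this.eventually_lt_const one_pos
    obtain ⟨s, hs1, hs2⟩ := h1.exists_mem
    obtain ⟨δ, hδ0, hδsub⟩ := mem_nhdsGT_iff_exists_Ioc_subset.1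
      (inter_mem hs1 (Ioc_mem_nhdsGT_of_mem ⟨le_refl (0:ℝ), zero_lt_one⟩))
    rw [mem_Ioi] at hδ0
    have hδ1 : δ ≤ 1 := (hδsub ⟨hδ0, le_refl δ⟩).2.2
    have hbound : ∀ ε ∈ Ioo (0:ℝ) δ, ‖ε ^ n * q ε‖ ≤ ‖q δ‖ * ε ^ n + δ * ε ^ c := by
      intro ε hε
      have hqε : ‖q ε - q δ‖ ≤ δ * (ε ^ c)⁻¹ := by
        have hint : ∫ t in ε..δ, q' t = q δ - q ε := hFTCq ε δ hε.1 hε.2.le hδ1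
        have hbd' : ∀ t ∈ Set.uIoc ε δ, ‖q' t‖ ≤ (ε ^ c)⁻¹ := by
          intro t ht
          rw [Set.uIoc_of_le hε.2.le] at ht
          have htδ : t ∈ Ioc (0:ℝ) δ := ⟨lt_trans hε.1 ht.1, ht.2⟩
          have h2 := (hs2 t (hδsub htδ).1).le
          have htc : (0:ℝ) < t ^ c := Real.rpow_pos_of_pos htδ.1 c
          have h3 : ‖q' t‖ ≤ (t ^ c)⁻¹ := by
            rw [← one_div]
            rw [le_div_iff₀ htc]
            calc ‖q' t‖ * t ^ c = ‖t ^ c * q' t‖ := by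
                  rw [norm_mul, Real.norm_of_nonneg htc.le]; ring
              _ ≤ 1 := h2
          refine le_trans h3 ?_
          exact inv_anti₀ (Real.rpow_pos_of_pos hε.1 c)
            (Real.rpow_le_rpow hε.1.le ht.1.le hc0.le)
        have := intervalIntegral.norm_integral_le_of_norm_le_const hbd'
        rw [hint] at this
        calc ‖q ε - q δ‖ = ‖q δ - q ε‖ := by rw [norm_sub_rev]
          _ ≤ (ε ^ c)⁻¹ * |δ - ε| := this
          _ ≤ (ε ^ c)⁻¹ * δ := by
              apply mul_le_mul_of_nonneg_left _ (inv_nonneg.2 (Real.rpow_nonneg hε.1.le c))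
              rw [abs_of_nonneg (by linarith [hε.2] : (0:ℝ) ≤ δ - ε)]
              linarith [hε.1]
          _ = δ * (ε ^ c)⁻¹ := by ring
      have hεn0 : (0:ℝ) ≤ ε ^ n := Real.rpow_nonneg hε.1.le n
      have hkey : ε ^ n * (ε ^ c)⁻¹ = ε ^ c := by
        rw [← Real.rpow_neg hε.1.le, ← Real.rpow_add hε.1,
          show n + -c = c by linarith [hncc]]
      calc ‖ε ^ n * q ε‖ = ε ^ n * ‖q ε‖ := by
            rw [norm_mul, Real.norm_of_nonneg hεn0]
        _ ≤ ε ^ n * (‖q δ‖ + δ * (ε ^ c)⁻¹) := by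
            apply mul_le_mul_of_nonneg_left _ hεn0
            calc ‖q ε‖ ≤ ‖q δ‖ + ‖q ε - q δ‖ := by
                  have := norm_add_le (q δ) (q ε - q δ)
                  simpa using this
              _ ≤ ‖q δ‖ + δ * (ε ^ c)⁻¹ := by linarith [hqε]
        _ = ‖q δ‖ * ε ^ n + δ * (ε ^ n * (ε ^ c)⁻¹) := by ring
        _ = ‖q δ‖ * ε ^ n + δ * ε ^ c := by rw [hkey]
    apply squeeze_zero_norm'
    · filter_upwards [Ioo_mem_nhdsGT_of_mem ⟨le_refl (0:ℝ), hδ0⟩] with ε hε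
      exact hbound ε hε
    · have : Tendsto (fun ε : ℝ => ‖q δ‖ * ε ^ n + δ * ε ^ c) (𝓝[>] (0:ℝ))
          (𝓝 (‖q δ‖ * 0 + δ * 0)) := (hεn.const_mul _).add (hεc.const_mul _)
      simpa using this
  -- the primitive F
  set F : ℝ → ℝ := fun y => y ^ n * q y + lam * (y ^ n * q' y) with hF
  have hFlim : Tendsto F (𝓝[>] (0:ℝ)) (𝓝 0) := by
    have h2 : Tendsto (fun ε : ℝ => ε ^ n * q' ε) (𝓝[>] (0:ℝ)) (𝓝 0) := by
      have h2' : Tendsto (fun ε : ℝ => ε ^ c * (ε ^ c * q' ε)) (𝓝[>] (0:ℝ)) (𝓝 0) := by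
        simpa using hεc.mul hlim
      refine Tendsto.congr' ?_ h2'
      filter_upwards [self_mem_nhdsWithin] with ε (hε : ε ∈ Ioi (0:ℝ))
      rw [← mul_assoc, ← Real.rpow_add hε, hcc]
    have := hq0.add (h2.const_mul lam)
    simpa using this
  have hFderiv : ∀ t ∈ Ioc (0:ℝ) 1, HasDerivWithinAt F (t ^ n * q' t) (Ioc 0 1) t := by
    intro t ht
    have ht0 : t ≠ 0 := ne_of_gt ht.1
    have hpow : HasDerivWithinAt (fun y : ℝ => y ^ n) (n * t ^ (n - 1)) (Ioc (0:ℝ) 1) t :=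
      (Real.hasDerivAt_rpow_const (Or.inl ht0)).hasDerivWithinAt
    have h1 := hpow.mul (hq' t ht)
    have h2 := (hpow.mul (hq'' t ht)).const_mul lam
    have h3 := h1.add h2
    have hpw : t ^ (n - 1) = t ^ n / t := by
      rw [Real.rpow_sub ht.1, Real.rpow_one]
    have hode : q'' t = -((n / t) * q' t) - n / lam / t * q t := by
      have := hODE t ht; linarith
    refine h3.congr_deriv ?_
    rw [hode, hpw]
    field_simp
    ring
  -- key identity A
  have hA : ∀ x ∈ Ioc (0:ℝ) 1, ∫ y in Ioc (0:ℝ) x, y ^ n * q' y = F x := by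
    intro x hx
    have hsub : Ioc (0:ℝ) x ⊆ Ioc (0:ℝ) 1 := Ioc_subset_Ioc_right hx.2
    exact aux_integral_Ioc_improper _ F hx.1
      (fun t ht => (hFderiv t (hsub ht)).mono hsub)
      (hgcont.mono hsub) (fun t ht => hgbd t (hsub ht)) hFlim
  -- key identity B
  have hB : ∀ x ∈ Ioc (0:ℝ) 1, ∫ y in Ioc x 1, q' y = - q x := by
    intro x hx
    rw [← intervalIntegral.integral_of_le hx.2, hFTCq x 1 hx.1 hx.2 le_rfl, hq1]
    ring
  -- integrability facts
  have hgm : AEStronglyMeasurable (fun y : ℝ => y ^ n * q' y) (volume.restrict (Ioc 0 1)) :=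
    hgcont.aestronglyMeasurable measurableSet_Ioc
  have hgint : IntegrableOn (fun y : ℝ => y ^ n * q' y) (Ioc 0 1) volume :=
    ⟨hgm, HasFiniteIntegral.restrict_of_bounded (C := M) (by simp [Real.volume_Ioc])
      ((ae_restrict_iff' measurableSet_Ioc).2 (ae_of_all _ hgbd))⟩
  have hq'int : ∀ x ∈ Ioc (0:ℝ) 1, IntegrableOn q' (Ioc x 1) volume := by
    intro x hx
    have hsub : Icc x 1 ⊆ Ioc (0:ℝ) 1 := fun t ht => ⟨lt_of_lt_of_le hx.1 ht.1, ht.2⟩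
    exact ((hq'cont.mono hsub).integrableOn_Icc).mono_set Ioc_subset_Icc_self
  -- main pointwise identity
  have key : ∀ x ∈ Ioc (0:ℝ) 1,
      (∫ y in Icc (0:ℝ) 1, φ y * gpyKernel (k - 1) x y) = lam * φ x := by
    intro x hx
    have hx0 : (0:ℝ) < x := hx.1
    have hxc : (0:ℝ) < x ^ c := Real.rpow_pos_of_pos hx0 c
    -- the two integrands on the two pieces
    have heq1 : ∀ y ∈ Ioc (0:ℝ) x, φ y * gpyKernel (k - 1) x y = (x ^ c)⁻¹ * (y ^ n * q' y) := by
      intro y hy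
      have hy1 : y ∈ Ioc (0:ℝ) 1 := ⟨hy.1, le_trans hy.2 hx.2⟩
      rw [hker, hφ y hy1, min_eq_right hy.2, max_eq_left hy.2,
        Real.div_rpow hy.1.le hx0.le]
      rw [show y ^ c * q' y * (y ^ c / x ^ c) = (x ^ c)⁻¹ * (y ^ c * y ^ c * q' y) by ring,
        ← Real.rpow_add hy.1, hcc]
    have heq2 : ∀ y ∈ Ioc x 1, φ y * gpyKernel (k - 1) x y = x ^ c * q' y := by
      intro y hy
      have hy0 : (0:ℝ) < y := lt_trans hx0 hy.1
      have hy1 : y ∈ Ioc (0:ℝ) 1 := ⟨hy0, hy.2⟩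
      rw [hker, hφ y hy1, min_eq_left hy.1.le, max_eq_right hy.1.le,
        Real.div_rpow hx0.le hy0.le]
      field_simp [ne_of_gt (Real.rpow_pos_of_pos hy0 c)]
    -- reduce Icc to Ioc
    have h0 : (∫ y in Icc (0:ℝ) 1, φ y * gpyKernel (k - 1) x y)
        = ∫ y in Ioc (0:ℝ) 1, φ y * gpyKernel (k - 1) x y := by
      apply setIntegral_congr_set
      exact Ioc_ae_eq_Icc.symm
    -- split
    have hint1 : IntegrableOn (fun y => φ y * gpyKernel (k - 1) x y) (Ioc 0 x) volume := by
      apply IntegrableOn.congr_fun _ (fun y hy => (heq1 y hy).symm) measurableSet_Ioc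
      exact ((hgint.mono_set (Ioc_subset_Ioc_right hx.2)).const_mul _)
    have hint2 : IntegrableOn (fun y => φ y * gpyKernel (k - 1) x y) (Ioc x 1) volume := by
      apply IntegrableOn.congr_fun _ (fun y hy => (heq2 y hy).symm) measurableSet_Ioc
      exact ((hq'int x hx).const_mul _)
    have hsplit : (∫ y in Ioc (0:ℝ) 1, φ y * gpyKernel (k - 1) x y)
        = (∫ y in Ioc (0:ℝ) x, φ y * gpyKernel (k - 1) x y)
          + ∫ y in Ioc x 1, φ y * gpyKernel (k - 1) x y := by
      rw [← setIntegral_union (Set.Ioc_disjoint_Ioc_of_le le_rfl) measurableSet_Ioc hint1 hint2,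
        Ioc_union_Ioc_eq_Ioc hx0.le hx.2]
    have hI1 : (∫ y in Ioc (0:ℝ) x, φ y * gpyKernel (k - 1) x y) = (x ^ c)⁻¹ * F x := by
      rw [setIntegral_congr_fun measurableSet_Ioc heq1, integral_const_mul, hA x hx]
    have hI2 : (∫ y in Ioc x 1, φ y * gpyKernel (k - 1) x y) = x ^ c * (- q x) := by
      rw [setIntegral_congr_fun measurableSet_Ioc heq2, integral_const_mul, hB x hx]
    rw [h0, hsplit, hI1, hI2, hφ x hx]
    simp only [hF]
    have hxn : x ^ n = x ^ c * x ^ c := by rw [← Real.rpow_add hx0, hcc]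
    rw [hxn]
    field_simp
    ring
  -- conclude a.e.
  have hae : ∀ᵐ x ∂mu01, x ∈ Ioc (0:ℝ) 1 := by
    rw [mu01, ae_restrict_iff' measurableSet_Icc]
    filter_upwards [compl_mem_ae_iff.2 (Real.volume_singleton (a := (0:ℝ)))] with x hx hxI
    rcases eq_or_lt_of_le hxI.1 with h | h
    · exact absurd h.symm hx
    · exact ⟨h, hxI.2⟩
  filter_upwards [hae] with x hx
  exact key x hx
end
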